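/- arXiv:1508.06777 — 2 statements merged into one kernel-verified Lean document; each statement's English description precedes it below -/
import Mathlib

section
/- For the scalar control system ẋ = 2u − x with running cost f₀(t,x,u) = 2u + |u| − x and control set P = [−1/2, 1/2], the value function V^inf(t,b) := inf_{u ∈ 𝕌} liminf_{T→∞} J(t,b;u,T) satisfies V^inf(0,b) = −b for every b ∈ ℝ; moreover, for every b ∈ ℝ and u ∈ 𝕌, if lim_{T→∞} J(0,b;u,T) exists in ℝ, then u ∈ L¹([0,∞)) and x_{b,0,u}(T) → 0 as T → ∞, and in that case b + lim_{T→∞} J(0,b;u,T) = ‖u‖_{L¹([0,∞))} ≥ 0. -/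
open Filter Topology MeasureTheory Metric Set Bornology
open scoped RealInnerProductSpace Classical

noncomputable section

/-- The set 𝕌 of admissible controls: Lebesgue measurable functions `ℝ → P`
bounded on every compact time interval. -/
def Adm (P : Type*) [MetricSpace P] [MeasurableSpace P] : Set (ℝ → P) :=
  {u | Measurable u ∧ ∀ T : ℝ, IsBounded (u '' Set.Icc 0 T)}

variable {P : Type*} [MetricSpace P] [MeasurableSpace P] [BorelSpace P]
  [CompleteSpace P] [TopologicalSpace.SeparableSpace P] [Nonempty P]
variable {F : Type*} [NormedAddCommGroup F] [NormedSpace ℝ F] [CompleteSpace F]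

/-- `traj b t u` is the (Carathéodory) solution of `ẋ(s) = f(s, x(s), u(s))`, `x(t) = b`. -/
def IsTraj (f : ℝ → F → P → F) (traj : F → ℝ → (ℝ → P) → ℝ → F) : Prop :=
  ∀ b : F, ∀ t : ℝ, ∀ u ∈ Adm P, ∀ s : ℝ,
    traj b t u s = b + ∫ r in t..s, f r (traj b t u r) (u r)

/-- Standing regularity assumptions of the paper: `f, f₀` continuous, locally
Lipschitz in `x`, and `f` of sublinear growth. -/
def StandardSystem (f : ℝ → F → P → F) (f₀ : ℝ → F → P → ℝ) : Prop :=
  Continuous (fun q : ℝ × F × P => f q.1 q.2.1 q.2.2) ∧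
  Continuous (fun q : ℝ × F × P => f₀ q.1 q.2.1 q.2.2) ∧
  (∀ t u, LocallyLipschitz fun x => f t x u) ∧
  (∀ t u, LocallyLipschitz fun x => f₀ t x u) ∧
  ∃ C : ℝ, ∀ t x u, ‖f t x u‖ ≤ C * (1 + ‖x‖)

/-- `J(θ, y; u, T)`. -/
def ctrlCost (f₀ : ℝ → F → P → ℝ) (traj : F → ℝ → (ℝ → P) → ℝ → F)
    (θ : ℝ) (y : F) (u : ℝ → P) (T : ℝ) : ℝ :=
  ∫ s in θ..T, f₀ s (traj y θ u s) (u s)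

/-- A real-valued function `V` enjoys the Dynamic Programming Principle. -/
def EnjoysDPP (f₀ : ℝ → F → P → ℝ) (traj : F → ℝ → (ℝ → P) → ℝ → F)
    (V : ℝ → F → ℝ) : Prop :=
  ∀ b : F, ∀ t τ : ℝ, 0 ≤ t → t ≤ τ →
    V t b = sInf {r : ℝ | ∃ u ∈ Adm P,
      r = ctrlCost f₀ traj t b u τ + V τ (traj b t u τ)}

/-- An extended-real-valued function `V` enjoys the Dynamic Programming Principle. -/
def EnjoysDPPE (f₀ : ℝ → F → P → ℝ) (traj : F → ℝ → (ℝ → P) → ℝ → F)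
    (V : ℝ → F → EReal) : Prop :=
  ∀ b : F, ∀ t τ : ℝ, 0 ≤ t → t ≤ τ →
    V t b = sInf {e : EReal | ∃ u ∈ Adm P,
      e = (ctrlCost f₀ traj t b u τ : ℝ) + V τ (traj b t u τ)}

/-- Concatenation `u' ⋄_T u''` of two controls at time `T`. -/
def concatCtrl (u' u'' : ℝ → P) (T : ℝ) : ℝ → P :=
  fun t => if t < T then u' t else u'' t

/-- A multi-valued map `Ω : ℝ^m × [0,∞) ⇉ 𝕌` induces asymptotic constraints. -/
def InducesAC (traj : F → ℝ → (ℝ → P) → ℝ → F)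
    (Ω : F → ℝ → Set (ℝ → P)) : Prop :=
  (∀ b t, Ω b t ⊆ Adm P) ∧
  ∀ (b : F) (t : ℝ), 0 ≤ t → ∀ T > t,
    Ω b t = {w | ∃ u ∈ Adm P, ∃ u₁ ∈ Ω (traj b t u T) T, w = concatCtrl u u₁ T}

/-- The value function `V^⋄` associated with asymptotic constraints `Ω`. -/
def Vdia (f₀ : ℝ → F → P → ℝ) (traj : F → ℝ → (ℝ → P) → ℝ → F)
    (Ω : F → ℝ → Set (ℝ → P)) (t : ℝ) (b : F) : EReal :=
  sInf {e : EReal | ∃ u ∈ Ω b t,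
    e = Filter.liminf (fun T : ℝ => ((ctrlCost f₀ traj t b u T : ℝ) : EReal)) Filter.atTop}

/-- The finite-horizon value function `V^T(θ, y)`. -/
def VT (f₀ : ℝ → F → P → ℝ) (traj : F → ℝ → (ℝ → P) → ℝ → F)
    (T θ : ℝ) (y : F) : ℝ :=
  sInf {r : ℝ | ∃ u ∈ Adm P, r = ctrlCost f₀ traj θ y u T}

/-- All the finite-horizon value functions are (well-defined and) finite. -/
def VTFinite (f₀ : ℝ → F → P → ℝ) (traj : F → ℝ → (ℝ → P) → ℝ → F) : Prop :=
  ∀ T θ : ℝ, ∀ y : F,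
    ({r : ℝ | ∃ u ∈ Adm P, r = ctrlCost f₀ traj θ y u T}).Nonempty ∧
    BddBelow {r : ℝ | ∃ u ∈ Adm P, r = ctrlCost f₀ traj θ y u T}

/-- A weakly agreeable control. -/
def WeaklyAgreeable (f₀ : ℝ → F → P → ℝ) (traj : F → ℝ → (ℝ → P) → ℝ → F)
    (bstar : F) (ustar : ℝ → P) : Prop :=
  ∀ t : ℝ, 0 ≤ t →
    Filter.liminf (fun T : ℝ =>
      ((ctrlCost f₀ traj 0 bstar ustar t
        + VT f₀ traj T t (traj bstar 0 ustar t) - VT f₀ traj T 0 bstar : ℝ) : EReal))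
      Filter.atTop ≤ 0

/-- An agreeable control. -/
def Agreeable (f₀ : ℝ → F → P → ℝ) (traj : F → ℝ → (ℝ → P) → ℝ → F)
    (bstar : F) (ustar : ℝ → P) : Prop :=
  ∀ t : ℝ, 0 ≤ t →
    Filter.limsup (fun T : ℝ =>
      ((ctrlCost f₀ traj 0 bstar ustar t
        + VT f₀ traj T t (traj bstar 0 ustar t) - VT f₀ traj T 0 bstar : ℝ) : EReal))
      Filter.atTop ≤ 0

section Superdifferentials

variable {H : Type*} [NormedAddCommGroup H] [InnerProductSpace ℝ H] [CompleteSpace H]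

/-- The Fréchet superdifferential of `h : H → ℝ` at `x`. -/
def frechetSuperdiff (h : H → ℝ) (x : H) : Set H :=
  {ζ | Filter.limsup
    (fun y => (((h y - h x - ⟪ζ, y - x⟫) / ‖y - x‖ : ℝ) : EReal)) (𝓝[≠] x) ≤ 0}

/-- The limiting superdifferential of `h : H → ℝ` at `x`. -/
def limitingSuperdiff (h : H → ℝ) (x : H) : Set H :=
  {ζ | ∃ xs : ℕ → H, ∃ ζs : ℕ → H,
    (∀ n, ζs n ∈ frechetSuperdiff h (xs n)) ∧
    Tendsto xs atTop (𝓝 x) ∧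
    Tendsto (fun n => h (xs n)) atTop (𝓝 (h x)) ∧
    Tendsto ζs atTop (𝓝 ζ)}

/-- The Fréchet superdifferential of `h : ℝ × H → ℝ` at `q`. -/
def frechetSuperdiffP (h : ℝ × H → ℝ) (q : ℝ × H) : Set (ℝ × H) :=
  {ζ | Filter.limsup
    (fun y : ℝ × H =>
      (((h y - h q - (ζ.1 * (y.1 - q.1) + ⟪ζ.2, y.2 - q.2⟫)) / ‖y - q‖ : ℝ) : EReal))
    (𝓝[≠] q) ≤ 0}

/-- The limiting superdifferential of `h : ℝ × H → ℝ` at `q`. -/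
def limitingSuperdiffP (h : ℝ × H → ℝ) (q : ℝ × H) : Set (ℝ × H) :=
  {ζ | ∃ qs : ℕ → ℝ × H, ∃ ζs : ℕ → ℝ × H,
    (∀ n, ζs n ∈ frechetSuperdiffP h (qs n)) ∧
    Tendsto qs atTop (𝓝 q) ∧
    Tendsto (fun n => h (qs n)) atTop (𝓝 (h q)) ∧
    Tendsto ζs atTop (𝓝 ζ)}

/-- The Hamilton–Pontryagin function `H(x, u, ψ, λ, t) = ψ·f(t,x,u) − λ f₀(t,x,u)`. -/
def Ham (f : ℝ → H → P → H) (f₀ : ℝ → H → P → ℝ)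
    (x : H) (u : P) (ψv : H) (lam t : ℝ) : ℝ :=
  ⟪ψv, f t x u⟫ - lam * f₀ t x u

/-- The PMP relations with `λ = 1` along `(x*, u*)` for a costate arc `ψ`:
the adjoint equation `−ψ̇(s) = ∂H/∂x` on `[0,∞)` and the a.e. maximum condition. -/
def PMPNormal (f : ℝ → H → P → H) (f₀ : ℝ → H → P → ℝ)
    (xstar : ℝ → H) (ustar : ℝ → P) (ψ : ℝ → H) : Prop :=
  ContinuousOn ψ (Set.Ici 0) ∧
  (∀ s : ℝ, 0 ≤ s →
    HasDerivWithinAt ψ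
      (-(gradient (fun x => Ham f f₀ x (ustar s) (ψ s) 1 s) (xstar s))) (Set.Ici 0) s) ∧
  (∀ᵐ s ∂(volume.restrict (Set.Ici (0:ℝ))),
    IsGreatest (Set.range fun v : P => Ham f f₀ (xstar s) v (ψ s) 1 s)
      (Ham f f₀ (xstar s) (ustar s) (ψ s) 1 s))

/-- The sensitivity relation (sens1): `−ψ(0) ∈ ∂⁺ₓ V(0, x*(0))`. -/
def Sens1 (V : ℝ → H → ℝ) (xstar : ℝ → H) (ψ : ℝ → H) : Prop :=
  -ψ 0 ∈ limitingSuperdiff (fun x => V 0 x) (xstar 0)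

/-- The sensitivity relation (sens2):
`(H(x*(s), u*(s), ψ(s), 1, s), −ψ(s)) ∈ ∂⁺V(s, x*(s))` for a.e. `s ≥ 0`. -/
def Sens2 (f : ℝ → H → P → H) (f₀ : ℝ → H → P → ℝ) (V : ℝ → H → ℝ)
    (xstar : ℝ → H) (ustar : ℝ → P) (ψ : ℝ → H) : Prop :=
  ∀ᵐ s ∂(volume.restrict (Set.Ici (0:ℝ))),
    (Ham f f₀ (xstar s) (ustar s) (ψ s) 1 s, -ψ s)
      ∈ limitingSuperdiffP (fun q => V q.1 q.2) (s, xstar s)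

end Superdifferentials

/-- The controls steering the state asymptotically to the target set `M`. -/
def OmegaM (traj : F → ℝ → (ℝ → P) → ℝ → F) (M : Set F) (b : F) (t : ℝ) :
    Set (ℝ → P) :=
  {u | u ∈ Adm P ∧
    Tendsto (fun s => Metric.infDist (traj b t u s) M) atTop (𝓝 0)}

/-- The controls for which the running cost has a convergent improper integral. -/
def OmegaR (f₀ : ℝ → F → P → ℝ) (traj : F → ℝ → (ℝ → P) → ℝ → F)
    (b : F) (t : ℝ) : Set (ℝ → P) :=
  {u | u ∈ Adm P ∧ ∃ c : ℝ, Tendsto (fun τ => ctrlCost f₀ traj t b u τ) atTop (𝓝 c)}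

section TwoBlocks

variable {Er Es : Type*} [NormedAddCommGroup Er] [NormedSpace ℝ Er] [CompleteSpace Er]
  [NormedAddCommGroup Es] [NormedSpace ℝ Es] [CompleteSpace Es]

/-- The optimal-time function `Q'_𝕎` with control values restricted to `P'`. -/
def Qprime (traj : Er × Es → ℝ → (ℝ → P) → ℝ → Er × Es) (P' : Set P) (𝕎 : Set Er)
    (t' : ℝ) (y' : Er × Es) (z : Es) : EReal :=
  sInf {e : EReal | ∃ τ : ℝ, 0 ≤ τ ∧ e = (τ : EReal) ∧
    ∃ u ∈ Adm P, (∀ t, u t ∈ P') ∧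
      (traj y' t' u (t' + τ)).1 ∈ 𝕎 ∧ (traj y' t' u (t' + τ)).2 = z}

/-- The optimal-time function `Q_𝕎`. -/
def Qmin (traj : Er × Es → ℝ → (ℝ → P) → ℝ → Er × Es) (𝕎 : Set Er)
    (t' : ℝ) (y' : Er × Es) (z : Es) : EReal :=
  sInf {e : EReal | ∃ τ : ℝ, 0 ≤ τ ∧ e = (τ : EReal) ∧
    ∃ u ∈ Adm P, (traj y' t' u (t' + τ)).1 ∈ 𝕎 ∧ (traj y' t' u (t' + τ)).2 = z}

/-- The maximal-time function `Q^𝕎`; it equals `+∞` if some motion never reaches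
`𝕎 × {z}`. -/
def Qmax (traj : Er × Es → ℝ → (ℝ → P) → ℝ → Er × Es) (𝕎 : Set Er)
    (t' : ℝ) (y' : Er × Es) (z : Es) : EReal :=
  if ∃ u ∈ Adm P, ∀ τ : ℝ, 0 ≤ τ →
      ¬((traj y' t' u (t' + τ)).1 ∈ 𝕎 ∧ (traj y' t' u (t' + τ)).2 = z) then ⊤
  else sSup {e : EReal | ∃ τ : ℝ, 0 ≤ τ ∧ e = (τ : EReal) ∧
    ∃ u ∈ Adm P, (traj y' t' u (t' + τ)).1 ∈ 𝕎 ∧ (traj y' t' u (t' + τ)).2 = z}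

end TwoBlocks


/-- The admissible controls of the scalar example: measurable with values in
`[-1/2, 1/2]`. -/
def Uc : Set (ℝ → ℝ) :=
  {u | Measurable u ∧ ∀ t : ℝ, u t ∈ Set.Icc (-(1/2) : ℝ) (1/2)}

/-- The cost `J(0, b; u, T)` of the scalar example, where `X u b` is the motion
`x_{b,0,u}` of `ẋ = 2u − x`, `x(0) = b`, and the running cost is `2u + |u| − x`. -/
def Jc (X : (ℝ → ℝ) → ℝ → ℝ → ℝ) (u : ℝ → ℝ) (b T : ℝ) : ℝ :=
  ∫ s in (0:ℝ)..T, (2 * u s + |u s| - X u b s)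

namespace ScalarEx

variable {u : ℝ → ℝ} {b : ℝ} {x : ℝ → ℝ}

lemma bddInt (hu1 : Measurable u) (hu2 : ∀ t, |u t| ≤ 1/2) (a c : ℝ) :
    IntervalIntegrable u volume a c := by
  rw [intervalIntegrable_iff]
  refine Integrable.mono' (g := fun _ => (1/2 : ℝ)) ?_ hu1.aestronglyMeasurable ?_
  · exact integrableOn_const measure_Ioc_lt_top.ne
  · exact Eventually.of_forall fun s => by simpa [Real.norm_eq_abs] using hu2 s

lemma absInt (hu1 : Measurable u) (hu2 : ∀ t, |u t| ≤ 1/2) (a c : ℝ) :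
    IntervalIntegrable (fun s => |u s|) volume a c := (bddInt hu1 hu2 a c).abs

lemma expuInt (hu1 : Measurable u) (hu2 : ∀ t, |u t| ≤ 1/2) (a c : ℝ) :
    IntervalIntegrable (fun s => 2 * Real.exp s * u s) volume a c := by
  have h := ((bddInt hu1 hu2 a c).const_mul 2).continuousOn_mul
      (Real.continuous_exp.continuousOn (s := uIcc a c))
  simpa [mul_comm, mul_assoc, mul_left_comm] using h


/-- Triangle Fubini for a globally integrable, strongly measurable function. -/
lemma fub' {t : ℝ} (ht : 0 ≤ t) {h : ℝ → ℝ} (hm : StronglyMeasurable h)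
    (hi : MeasureTheory.Integrable h) :
    ∫ s in Ioc (0:ℝ) t, Real.exp s * ∫ r in Ioc (0:ℝ) s, h r
      = ∫ r in Ioc (0:ℝ) t, (Real.exp t - Real.exp r) * h r := by
  set ν := volume.restrict (Ioc (0:ℝ) t) with hν
  set F : ℝ × ℝ → ℝ := fun p => if p.2 ≤ p.1 then Real.exp p.1 * h p.2 else 0 with hF
  have hFmeas : StronglyMeasurable F := by
    have h1 : StronglyMeasurable fun p : ℝ × ℝ => Real.exp p.1 * h p.2 :=
      (Real.continuous_exp.comp continuous_fst).stronglyMeasurable.mul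
        (hm.comp_measurable measurable_snd)
    have h2 : MeasurableSet {p : ℝ × ℝ | p.2 ≤ p.1} :=
      measurableSet_le measurable_snd measurable_fst
    have : F = Set.indicator {p : ℝ × ℝ | p.2 ≤ p.1}
        (fun p : ℝ × ℝ => Real.exp p.1 * h p.2) := by
      ext p; by_cases hp : p.2 ≤ p.1 <;> simp [hF, hp, Set.indicator_of_mem, hp]
    rw [this]; exact h1.indicator h2
  have hprod : ν.prod ν = (volume.prod volume).restrict (Ioc (0:ℝ) t ×ˢ Ioc (0:ℝ) t) :=
    Measure.prod_restrict _ _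
  have haemem : ∀ᵐ p : ℝ × ℝ ∂ν.prod ν, p ∈ Ioc (0:ℝ) t ×ˢ Ioc (0:ℝ) t := by
    rw [hprod]; exact ae_restrict_mem (measurableSet_Ioc.prod measurableSet_Ioc)
  -- integrability of F on the product
  have hbint : MeasureTheory.Integrable (fun p : ℝ × ℝ => Real.exp t * ‖h p.2‖) (ν.prod ν) := by
    have hmap : (ν.prod ν).map Prod.snd = ν Set.univ • ν := Measure.map_snd_prod
    have h3 : MeasureTheory.Integrable (fun y : ℝ => ‖h y‖) ((ν.prod ν).map Prod.snd) := by
      rw [hmap]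
      refine (hi.norm.restrict (s := Ioc 0 t)).smul_measure ?_
      rw [hν, Measure.restrict_apply_univ]
      exact measure_Ioc_lt_top.ne
    have h4 := (integrable_map_measure (hm.norm.aestronglyMeasurable)
        measurable_snd.aemeasurable).1 h3
    exact (h4.const_mul _)
  have hFint : MeasureTheory.Integrable (Function.uncurry fun s r => F (s, r)) (ν.prod ν) := by
    refine Integrable.mono' hbint ?_ ?_
    · exact (hFmeas.aestronglyMeasurable)
    · filter_upwards [haemem] with p hp
      by_cases hc : p.2 ≤ p.1
      · simp only [Function.uncurry, hF, if_pos hc, Real.norm_eq_abs, abs_mul,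
          Real.abs_exp]
        exact mul_le_mul_of_nonneg_right (Real.exp_le_exp.2 hp.1.2) (abs_nonneg _)
      · simp [Function.uncurry, hF, if_neg hc]
        positivity
  have hswap := MeasureTheory.integral_integral_swap (μ := ν) (ν := ν)
      (f := fun s r => F (s, r)) hFint
  -- identify LHS
  have hL : ∫ s, (∫ r, F (s, r) ∂ν) ∂ν = ∫ s in Ioc (0:ℝ) t, Real.exp s * ∫ r in Ioc (0:ℝ) s, h r := by
    refine setIntegral_congr_fun measurableSet_Ioc fun s hs => ?_
    have : (fun r => F (s, r)) = Set.indicator (Iic s) (fun r => Real.exp s * h r) := by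
      ext r; by_cases hr : r ≤ s <;> simp [hF, hr]
    rw [this, hν, setIntegral_indicator measurableSet_Iic]
    have hset : Ioc 0 t ∩ Iic s = Ioc 0 s := by
      ext r
      simp only [mem_inter_iff, mem_Ioc, mem_Iic]
      constructor
      · rintro ⟨⟨a, _⟩, c⟩; exact ⟨a, c⟩
      · rintro ⟨a, c⟩; exact ⟨⟨a, c.trans hs.2⟩, c⟩
    rw [hset, MeasureTheory.integral_const_mul]
  -- identify RHS
  have hR : ∫ r, (∫ s, F (s, r) ∂ν) ∂ν = ∫ r in Ioc (0:ℝ) t, (Real.exp t - Real.exp r) * h r := by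
    refine setIntegral_congr_fun measurableSet_Ioc fun r hr => ?_
    have : (fun s => F (s, r)) = Set.indicator (Ici r) (fun s => Real.exp s * h r) := by
      ext s; by_cases hs : r ≤ s <;> simp [hF, hs]
    rw [this, hν, setIntegral_indicator measurableSet_Ici]
    have hset : Ioc 0 t ∩ Ici r = Icc r t := by
      ext s
      simp only [mem_inter_iff, mem_Ioc, mem_Ici, mem_Icc]
      constructor
      · rintro ⟨⟨_, h3⟩, h1⟩; exact ⟨h1, h3⟩
      · rintro ⟨h1, h2⟩; exact ⟨⟨lt_of_lt_of_le hr.1 h1, h2⟩, h1⟩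
    rw [hset, MeasureTheory.integral_mul_const, integral_Icc_eq_integral_Ioc,
      ← intervalIntegral.integral_of_le hr.2, integral_exp]
  rw [← hL, ← hR]; exact hswap


/-- Triangle Fubini, assuming only integrability on `Ioc 0 t`. -/
lemma fub {t : ℝ} (ht : 0 ≤ t) {h : ℝ → ℝ} (hi : IntegrableOn h (Ioc (0:ℝ) t)) :
    ∫ s in Ioc (0:ℝ) t, Real.exp s * ∫ r in Ioc (0:ℝ) s, h r
      = ∫ r in Ioc (0:ℝ) t, (Real.exp t - Real.exp r) * h r := by
  set h' : ℝ → ℝ := (Ioc (0:ℝ) t).indicator (hi.1.mk h) with hh'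
  have hm' : StronglyMeasurable h' := hi.1.stronglyMeasurable_mk.indicator measurableSet_Ioc
  have heq : h =ᵐ[volume.restrict (Ioc (0:ℝ) t)] h' := by
    filter_upwards [hi.1.ae_eq_mk, ae_restrict_mem measurableSet_Ioc] with r h1 h2
    rw [h1, hh', Set.indicator_of_mem h2]
  have hi' : MeasureTheory.Integrable h' := by
    rw [hh', integrable_indicator_iff measurableSet_Ioc]
    exact hi.congr hi.1.ae_eq_mk
  have hinner : ∀ s ∈ Ioc (0:ℝ) t, ∫ r in Ioc (0:ℝ) s, h r = ∫ r in Ioc (0:ℝ) s, h' r :=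
    fun s hs => integral_congr_ae
      (ae_restrict_of_ae_restrict_of_subset (Ioc_subset_Ioc_right hs.2) heq)
  calc ∫ s in Ioc (0:ℝ) t, Real.exp s * ∫ r in Ioc (0:ℝ) s, h r
      = ∫ s in Ioc (0:ℝ) t, Real.exp s * ∫ r in Ioc (0:ℝ) s, h' r :=
        setIntegral_congr_fun measurableSet_Ioc fun s hs => by rw [hinner s hs]
    _ = ∫ r in Ioc (0:ℝ) t, (Real.exp t - Real.exp r) * h' r := fub' ht hm' hi'
    _ = ∫ r in Ioc (0:ℝ) t, (Real.exp t - Real.exp r) * h r :=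
        integral_congr_ae (by filter_upwards [heq] with r h1; rw [h1])


/-- If the vector field is integrable on `[0,t]`, the explicit formula holds at `t`. -/
lemma formula (hx : ∀ τ : ℝ, x τ = b + ∫ s in (0:ℝ)..τ, (2 * u s - x s))
    {t : ℝ} (ht : 0 ≤ t)
    (hint : IntervalIntegrable (fun s => 2 * u s - x s) volume 0 t) :
    Real.exp t * x t = b + ∫ r in (0:ℝ)..t, 2 * Real.exp r * u r := by
  set g : ℝ → ℝ := fun s => 2 * u s - x s with hg
  set P : ℝ → ℝ := fun s => ∫ r in (0:ℝ)..s, g r with hPdef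
  have hgIoc : IntegrableOn g (Ioc (0:ℝ) t) :=
    (intervalIntegrable_iff_integrableOn_Ioc_of_le ht).1 hint
  have hP : ContinuousOn P (Icc 0 t) := by
    have h1 : IntegrableOn g (uIcc 0 t) := by
      rw [uIcc_of_le ht]
      exact (integrableOn_Icc_iff_integrableOn_Ioc).2 hgIoc
    have := intervalIntegral.continuousOn_primitive_interval (f := g) (a := 0) (b := t)
      (μ := volume) h1
    rwa [uIcc_of_le ht] at this
  have i1 : IntervalIntegrable (fun r => Real.exp r * g r) volume 0 t :=
    hint.continuousOn_mul Real.continuous_exp.continuousOn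
  have i2 : IntervalIntegrable (fun r => Real.exp r * b) volume 0 t :=
    (Real.continuous_exp.mul continuous_const).intervalIntegrable _ _
  have i3 : IntervalIntegrable (fun r => Real.exp r * P r) volume 0 t := by
    apply ContinuousOn.intervalIntegrable
    rw [uIcc_of_le ht]
    exact Real.continuous_exp.continuousOn.mul hP
  have hxP : ∀ r : ℝ, x r = b + P r := fun r => hx r
  have hdecomp : ∀ r : ℝ,
      2 * Real.exp r * u r = Real.exp r * g r + (Real.exp r * b + Real.exp r * P r) := by
    intro r
    have h1 : x r = b + P r := hxP r
    have h2 : g r = 2 * u r - x r := rfl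
    rw [h2, h1]; ring
  have e1 : ∫ r in (0:ℝ)..t, 2 * Real.exp r * u r
      = (∫ r in (0:ℝ)..t, Real.exp r * g r)
        + ((∫ r in (0:ℝ)..t, Real.exp r * b) + ∫ r in (0:ℝ)..t, Real.exp r * P r) := by
    rw [← intervalIntegral.integral_add i2 i3, ← intervalIntegral.integral_add i1 (i2.add i3)]
    exact intervalIntegral.integral_congr fun r _ => hdecomp r
  have e2 : ∫ r in (0:ℝ)..t, Real.exp r * b = (Real.exp t - 1) * b := by
    rw [intervalIntegral.integral_mul_const, integral_exp, Real.exp_zero]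
  have e3 : ∫ r in (0:ℝ)..t, Real.exp r * P r
      = Real.exp t * P t - ∫ r in (0:ℝ)..t, Real.exp r * g r := by
    rw [intervalIntegral.integral_of_le ht]
    have h4 : ∫ s in Ioc (0:ℝ) t, Real.exp s * P s
        = ∫ s in Ioc (0:ℝ) t, Real.exp s * ∫ r in Ioc (0:ℝ) s, g r := by
      refine setIntegral_congr_fun measurableSet_Ioc fun s hs => ?_
      rw [hPdef]
      simp only
      rw [intervalIntegral.integral_of_le hs.1.le]
    rw [h4, fub ht hgIoc]
    have h5 : ∫ r in Ioc (0:ℝ) t, (Real.exp t - Real.exp r) * g r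
        = Real.exp t * (∫ r in Ioc (0:ℝ) t, g r) - ∫ r in Ioc (0:ℝ) t, Real.exp r * g r := by
      rw [← MeasureTheory.integral_const_mul, ← MeasureTheory.integral_sub]
      · exact setIntegral_congr_fun measurableSet_Ioc fun r _ => by ring
      · exact hgIoc.const_mul _
      · exact (intervalIntegrable_iff_integrableOn_Ioc_of_le ht).1 i1
    rw [h5, intervalIntegral.integral_of_le ht]
    congr 1
    rw [hPdef]
    simp only
    rw [intervalIntegral.integral_of_le ht]
  rw [e1, e2, e3, hxP t]
  ring

/-- The a priori bound coming from the explicit formula. -/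
lemma bound_of_eq (hu1 : Measurable u) (hu2 : ∀ t, |u t| ≤ 1/2) {t : ℝ} (ht : 0 ≤ t) {X : ℝ}
    (hfor : Real.exp t * X = b + ∫ r in (0:ℝ)..t, 2 * Real.exp r * u r) :
    |X| ≤ |b| + 1 := by
  have h1 : |∫ r in (0:ℝ)..t, 2 * Real.exp r * u r| ≤ Real.exp t - 1 := by
    have hia : IntervalIntegrable (fun s => 2 * Real.exp s * |u s|) volume 0 t := by
      have h := (expuInt hu1 hu2 0 t).abs
      have heq : (fun s => |2 * Real.exp s * u s|) = fun s => 2 * Real.exp s * |u s| :=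
        funext fun s => by rw [abs_mul, abs_mul, abs_of_pos (Real.exp_pos s), abs_two]
      rwa [heq] at h
    have h2 : |∫ r in (0:ℝ)..t, 2 * Real.exp r * u r|
        ≤ ∫ r in (0:ℝ)..t, 2 * Real.exp r * |u r| := by
      simpa [Real.norm_eq_abs, abs_mul, abs_of_pos (Real.exp_pos _)] using
        intervalIntegral.norm_integral_le_integral_norm (f := fun r => 2 * Real.exp r * u r)
          (a := 0) (b := t) (μ := volume) ht
    have h3 : ∫ r in (0:ℝ)..t, 2 * Real.exp r * |u r| ≤ ∫ r in (0:ℝ)..t, Real.exp r := by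
      apply intervalIntegral.integral_mono_on ht hia
        (Real.continuous_exp.intervalIntegrable 0 t)
      intro s _
      nlinarith [hu2 s, Real.exp_pos s, abs_nonneg (u s)]
    have h4 : ∫ r in (0:ℝ)..t, Real.exp r = Real.exp t - 1 := by
      rw [integral_exp, Real.exp_zero]
    linarith
  have h5 : |Real.exp t * X| ≤ |b| + (Real.exp t - 1) := by
    rw [hfor]
    calc |b + ∫ r in (0:ℝ)..t, 2 * Real.exp r * u r|
        ≤ |b| + |∫ r in (0:ℝ)..t, 2 * Real.exp r * u r| := abs_add_le _ _
      _ ≤ |b| + (Real.exp t - 1) := by linarith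
  have hXe : |X| * Real.exp t = |Real.exp t * X| := by
    rw [abs_mul, abs_of_pos (Real.exp_pos t)]; ring
  have h7 : |b| ≤ |b| * Real.exp t := le_mul_of_one_le_right (abs_nonneg _) (Real.one_le_exp ht)
  have h6 : |X| * Real.exp t ≤ (|b| + 1) * Real.exp t := by
    rw [hXe]; nlinarith [h5]
  exact le_of_mul_le_mul_right h6 (Real.exp_pos t)

/-- Global integrability of the vector field along the trajectory. -/
lemma gInt (hu1 : Measurable u) (hu2 : ∀ t, |u t| ≤ 1/2)
    (hx : ∀ τ : ℝ, x τ = b + ∫ s in (0:ℝ)..τ, (2 * u s - x s)) :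
    ∀ t : ℝ, 0 ≤ t → IntervalIntegrable (fun s => 2 * u s - x s) volume 0 t := by
  set g : ℝ → ℝ := fun s => 2 * u s - x s with hg
  by_contra hcon
  push_neg at hcon
  obtain ⟨t₁, ht₁, ht₁'⟩ := hcon
  set B : Set ℝ := {t | 0 ≤ t ∧ ¬ IntervalIntegrable g volume 0 t} with hB
  have hBne : B.Nonempty := ⟨t₁, ht₁, ht₁'⟩
  have hbdd : BddBelow B := ⟨0, fun y hy => hy.1⟩
  set T : ℝ := sInf B with hT
  have hT0 : 0 ≤ T := le_csInf hBne fun y hy => hy.1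
  have hlt : ∀ s, 0 ≤ s → s < T → IntervalIntegrable g volume 0 s := by
    intro s hs hsT
    by_contra h'
    exact absurd (csInf_le hbdd ⟨hs, h'⟩) (not_le.2 hsT)
  have hmono : ∀ t₀ s : ℝ, t₀ ∈ B → t₀ ≤ s → ¬ IntervalIntegrable g volume 0 s := by
    intro t₀ s ht₀ hts h'
    exact ht₀.2 (h'.mono_set (by
      rw [uIcc_of_le ht₀.1, uIcc_of_le (le_trans ht₀.1 hts)]
      exact Icc_subset_Icc_right hts))
  have hgt : ∀ s, T < s → x s = b := by
    intro s hs
    obtain ⟨t₀, ht₀B, ht₀⟩ := exists_lt_of_csInf_lt hBne hs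
    rw [hx s, intervalIntegral.integral_undef (hmono t₀ s ht₀B ht₀.le), add_zero]
  set A : ℝ → ℝ := fun s => ∫ r in (0:ℝ)..s, 2 * Real.exp r * u r with hA
  have hAcont : Continuous A :=
    intervalIntegral.continuous_primitive (fun a c => expuInt hu1 hu2 a c) 0
  have hxlt : ∀ s, 0 ≤ s → s < T → x s = Real.exp (-s) * (b + A s) := by
    intro s hs hsT
    have h1 := formula hx hs (hlt s hs hsT)
    rw [Real.exp_neg]
    field_simp
    linarith [h1]
  have hbd : ∀ s, 0 ≤ s → s < T → |x s| ≤ |b| + 1 := fun s h1 h2 =>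
    bound_of_eq hu1 hu2 h1 (formula hx h1 (hlt s h1 h2))
  set x' : ℝ → ℝ := fun s => if s < T then Real.exp (-s) * (b + A s) else b with hx'
  have hx'meas : Measurable x' := by
    apply Measurable.ite (measurableSet_lt measurable_id measurable_const)
    · exact ((Real.continuous_exp.comp continuous_neg).mul
        (continuous_const.add hAcont)).measurable
    · exact measurable_const
  have hxx' : ∀ s ∈ Ioc (0:ℝ) (T+1), s ≠ T → x s = x' s := by
    intro s hs hne
    by_cases hsT : s < T
    · simp only [hx', if_pos hsT]; exact hxlt s hs.1.le hsT
    · simp only [hx', if_neg hsT]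
      exact hgt s (lt_of_le_of_ne (not_lt.1 hsT) (Ne.symm hne))
  have hae : x =ᵐ[volume.restrict (Ioc (0:ℝ) (T+1))] x' := by
    have hT' : ∀ᵐ (s : ℝ) ∂(volume.restrict (Ioc (0:ℝ) (T+1))), s ≠ T := by
      refine ae_restrict_of_ae ?_
      rw [ae_iff]
      simp only [not_not, Set.setOf_eq_eq_singleton]
      exact Real.volume_singleton
    filter_upwards [ae_restrict_mem measurableSet_Ioc, hT'] with s h1 h2
    exact hxx' s h1 h2
  have hx'bd : ∀ s ∈ Ioc (0:ℝ) (T+1), ‖x' s‖ ≤ |b| + 1 := by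
    intro s hs
    simp only [hx', Real.norm_eq_abs]
    by_cases hsT : s < T
    · simp only [if_pos hsT]
      rw [← hxlt s hs.1.le hsT]
      exact hbd s hs.1.le hsT
    · simp only [if_neg hsT]
      linarith [abs_nonneg b]
  have hxint : IntegrableOn x (Ioc (0:ℝ) (T+1)) := by
    have h1 : IntegrableOn x' (Ioc (0:ℝ) (T+1)) := by
      refine Integrable.mono' (g := fun _ => |b| + 1)
        (integrableOn_const measure_Ioc_lt_top.ne)
        hx'meas.aestronglyMeasurable ?_
      filter_upwards [ae_restrict_mem measurableSet_Ioc] with s h2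
      exact hx'bd s h2
    exact h1.congr hae.symm
  have hgood : IntervalIntegrable g volume 0 (T+1) := by
    have h2 : IntervalIntegrable x volume 0 (T+1) :=
      (intervalIntegrable_iff_integrableOn_Ioc_of_le (by linarith)).2 hxint
    exact ((bddInt hu1 hu2 0 (T+1)).const_mul 2).sub h2
  obtain ⟨t₀, ht₀B, hlt'⟩ := exists_lt_of_csInf_lt hBne (show T < T+1 by linarith)
  exact ht₀B.2 (hgood.mono_set (by
    rw [uIcc_of_le ht₀B.1, uIcc_of_le (by linarith [ht₀B.1] : (0:ℝ) ≤ T+1)]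
    exact Icc_subset_Icc_right hlt'.le))


/-- The cost identity. -/
lemma cost_eq (hu1 : Measurable u) (hu2 : ∀ t, |u t| ≤ 1/2)
    (hx : ∀ τ : ℝ, x τ = b + ∫ s in (0:ℝ)..τ, (2 * u s - x s))
    {T : ℝ} (hT : 0 ≤ T) :
    ∫ s in (0:ℝ)..T, (2 * u s + |u s| - x s)
      = x T - b + ∫ s in (0:ℝ)..T, |u s| := by
  have h1 : (fun s => 2 * u s + |u s| - x s) = fun s => (2 * u s - x s) + |u s| :=
    funext fun s => by ring
  rw [h1, intervalIntegral.integral_add (gInt hu1 hu2 hx T hT) (absInt hu1 hu2 0 T)]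
  have h2 := hx T
  have h3 : ∫ s in (0:ℝ)..T, (2 * u s - x s) = x T - b := by linarith
  rw [h3]

lemma xbound (hu1 : Measurable u) (hu2 : ∀ t, |u t| ≤ 1/2)
    (hx : ∀ τ : ℝ, x τ = b + ∫ s in (0:ℝ)..τ, (2 * u s - x s))
    {T : ℝ} (hT : 0 ≤ T) : |x T| ≤ |b| + 1 :=
  bound_of_eq hu1 hu2 hT (formula hx hT (gInt hu1 hu2 hx T hT))

lemma xexp (hx : ∀ τ : ℝ, x τ = b + ∫ s in (0:ℝ)..τ, (2 * u s - x s))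
    (hu1 : Measurable u) (hu2 : ∀ t, |u t| ≤ 1/2) {T : ℝ} (hT : 0 ≤ T) :
    x T = Real.exp (-T) * (b + ∫ r in (0:ℝ)..T, 2 * Real.exp r * u r) := by
  have h1 := formula hx hT (gInt hu1 hu2 hx T hT)
  rw [Real.exp_neg]
  have h2 := Real.exp_pos T
  field_simp
  linarith

/-- Monotonicity of the accumulated absolute control. -/
lemma Imono (hu1 : Measurable u) (hu2 : ∀ t, |u t| ≤ 1/2) :
    Monotone (fun T => ∫ s in (0:ℝ)..T, |u s|) := by
  intro a c hac
  simp only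
  have h1 := intervalIntegral.integral_add_adjacent_intervals
    (absInt hu1 hu2 0 a) (absInt hu1 hu2 a c)
  have h2 : 0 ≤ ∫ s in a..c, |u s| :=
    intervalIntegral.integral_nonneg hac fun s _ => abs_nonneg _
  linarith

/-- If the control is not integrable, the accumulated absolute control blows up. -/
lemma Itop (hu1 : Measurable u) (hu2 : ∀ t, |u t| ≤ 1/2)
    (hnot : ¬ IntegrableOn u (Ioi (0:ℝ))) :
    Tendsto (fun T => ∫ s in (0:ℝ)..T, |u s|) atTop atTop := by
  apply tendsto_atTop_atTop_of_monotone' (Imono hu1 hu2)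
  rintro ⟨C, hC⟩
  apply hnot
  apply integrableOn_Ioi_of_intervalIntegral_norm_bounded C 0
    (fun n : ℕ => (intervalIntegrable_iff_integrableOn_Ioc_of_le (Nat.cast_nonneg n)).1
      (bddInt hu1 hu2 0 n)) tendsto_natCast_atTop_atTop
  refine Eventually.of_forall fun n => ?_
  have := hC (Set.mem_range_self (f := fun T => ∫ s in (0:ℝ)..T, |u s|) (n : ℝ))
  simpa [Real.norm_eq_abs] using this

/-- If the control is integrable, the state tends to `0`. -/
lemma tendstoZero (hu1 : Measurable u) (hu2 : ∀ t, |u t| ≤ 1/2)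
    (hx : ∀ τ : ℝ, x τ = b + ∫ s in (0:ℝ)..τ, (2 * u s - x s))
    (habs : IntegrableOn (fun s => |u s|) (Ioi (0:ℝ))) :
    Tendsto x atTop (𝓝 0) := by
  set I : ℝ → ℝ := fun T => ∫ s in (0:ℝ)..T, |u s| with hI
  set L : ℝ := ∫ s in Ioi (0:ℝ), |u s| with hLdef
  have hIL : Tendsto I atTop (𝓝 L) :=
    intervalIntegral_tendsto_integral_Ioi 0 habs tendsto_id
  have hIle : ∀ T, 0 ≤ T → I T ≤ L := by
    intro T hT
    rw [hI]
    simp only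
    rw [intervalIntegral.integral_of_le hT]
    exact setIntegral_mono_set habs
      (Eventually.of_forall fun s => abs_nonneg _)
      (HasSubset.Subset.eventuallyLE Ioc_subset_Ioi_self)
  have hInn : ∀ T, 0 ≤ T → 0 ≤ I T := fun T hT =>
    intervalIntegral.integral_nonneg hT fun s _ => abs_nonneg _
  set G : ℝ → ℝ := fun T =>
    |b| * Real.exp (-T) + (2 * Real.exp (-(T/2)) * L + 2 * (L - I (T/2))) with hG
  have hbound : ∀ T, 0 ≤ T → |x T| ≤ G T := by
    intro T hT
    have hT2 : (0:ℝ) ≤ T/2 := by linarith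
    have hT2' : T/2 ≤ T := by linarith
    set A := ∫ r in (0:ℝ)..T, 2 * Real.exp r * u r with hA
    have hsplit : A = (∫ r in (0:ℝ)..(T/2), 2 * Real.exp r * u r)
        + ∫ r in (T/2)..T, 2 * Real.exp r * u r :=
      (intervalIntegral.integral_add_adjacent_intervals
        (expuInt hu1 hu2 0 (T/2)) (expuInt hu1 hu2 (T/2) T)).symm
    -- first piece
    have habs1 : |∫ r in (0:ℝ)..(T/2), 2 * Real.exp r * u r|
        ≤ 2 * Real.exp (T/2) * I (T/2) := by
      have h2 : |∫ r in (0:ℝ)..(T/2), 2 * Real.exp r * u r|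
          ≤ ∫ r in (0:ℝ)..(T/2), 2 * Real.exp r * |u r| := by
        simpa [Real.norm_eq_abs, abs_mul, abs_of_pos (Real.exp_pos _)] using
          intervalIntegral.norm_integral_le_integral_norm
            (f := fun r => 2 * Real.exp r * u r) (a := 0) (b := T/2) (μ := volume) hT2
      have hia : IntervalIntegrable (fun s => 2 * Real.exp s * |u s|) volume 0 (T/2) := by
        have h := (expuInt hu1 hu2 0 (T/2)).abs
        have heq : (fun s => |2 * Real.exp s * u s|) = fun s => 2 * Real.exp s * |u s| :=
          funext fun s => by rw [abs_mul, abs_mul, abs_of_pos (Real.exp_pos s), abs_two]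
        rwa [heq] at h
      have h3 : ∫ r in (0:ℝ)..(T/2), 2 * Real.exp r * |u r|
          ≤ ∫ r in (0:ℝ)..(T/2), 2 * Real.exp (T/2) * |u r| := by
        apply intervalIntegral.integral_mono_on hT2 hia
          ((absInt hu1 hu2 0 (T/2)).const_mul _)
        intro s hs
        have := Real.exp_le_exp.2 hs.2
        nlinarith [abs_nonneg (u s)]
      have h4 : ∫ r in (0:ℝ)..(T/2), 2 * Real.exp (T/2) * |u r|
          = 2 * Real.exp (T/2) * I (T/2) := intervalIntegral.integral_const_mul _ _
      linarith
    -- second piece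
    have habs2 : |∫ r in (T/2)..T, 2 * Real.exp r * u r|
        ≤ 2 * Real.exp T * (I T - I (T/2)) := by
      have h2 : |∫ r in (T/2)..T, 2 * Real.exp r * u r|
          ≤ ∫ r in (T/2)..T, 2 * Real.exp r * |u r| := by
        simpa [Real.norm_eq_abs, abs_mul, abs_of_pos (Real.exp_pos _)] using
          intervalIntegral.norm_integral_le_integral_norm
            (f := fun r => 2 * Real.exp r * u r) (a := T/2) (b := T) (μ := volume) hT2'
      have hia : IntervalIntegrable (fun s => 2 * Real.exp s * |u s|) volume (T/2) T := by
        have h := (expuInt hu1 hu2 (T/2) T).abs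
        have heq : (fun s => |2 * Real.exp s * u s|) = fun s => 2 * Real.exp s * |u s| :=
          funext fun s => by rw [abs_mul, abs_mul, abs_of_pos (Real.exp_pos s), abs_two]
        rwa [heq] at h
      have h3 : ∫ r in (T/2)..T, 2 * Real.exp r * |u r|
          ≤ ∫ r in (T/2)..T, 2 * Real.exp T * |u r| := by
        apply intervalIntegral.integral_mono_on hT2' hia
          ((absInt hu1 hu2 (T/2) T).const_mul _)
        intro s hs
        have := Real.exp_le_exp.2 hs.2
        nlinarith [abs_nonneg (u s)]
      have h4 : ∫ r in (T/2)..T, 2 * Real.exp T * |u r|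
          = 2 * Real.exp T * (∫ r in (T/2)..T, |u r|) := intervalIntegral.integral_const_mul _ _
      have h5 : ∫ r in (T/2)..T, |u r| = I T - I (T/2) := by
        have := intervalIntegral.integral_add_adjacent_intervals
          (absInt hu1 hu2 0 (T/2)) (absInt hu1 hu2 (T/2) T)
        rw [hI]; simp only; linarith
      rw [h4, h5] at h3
      linarith
    have hAbd : |A| ≤ 2 * Real.exp (T/2) * I (T/2) + 2 * Real.exp T * (I T - I (T/2)) := by
      rw [hsplit]
      calc |(∫ r in (0:ℝ)..(T/2), 2 * Real.exp r * u r)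
            + ∫ r in (T/2)..T, 2 * Real.exp r * u r|
          ≤ |∫ r in (0:ℝ)..(T/2), 2 * Real.exp r * u r|
            + |∫ r in (T/2)..T, 2 * Real.exp r * u r| := abs_add_le _ _
        _ ≤ _ := add_le_add habs1 habs2
    have hxT : x T = Real.exp (-T) * (b + A) := xexp hx hu1 hu2 hT
    have hE1 : Real.exp (-T) * Real.exp (T/2) = Real.exp (-(T/2)) := by
      rw [← Real.exp_add]; ring_nf
    have hE2 : Real.exp (-T) * Real.exp T = 1 := by
      rw [← Real.exp_add]; simp
    have hexpneg := Real.exp_pos (-T)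
    calc |x T| = Real.exp (-T) * |b + A| := by
          rw [hxT, abs_mul, abs_of_pos hexpneg]
      _ ≤ Real.exp (-T) * (|b| + |A|) :=
          mul_le_mul_of_nonneg_left (abs_add_le _ _) hexpneg.le
      _ ≤ Real.exp (-T) * (|b| + (2 * Real.exp (T/2) * I (T/2)
            + 2 * Real.exp T * (I T - I (T/2)))) := by
          apply mul_le_mul_of_nonneg_left _ hexpneg.le
          linarith
      _ = |b| * Real.exp (-T) + (2 * (Real.exp (-T) * Real.exp (T/2)) * I (T/2)
            + 2 * (Real.exp (-T) * Real.exp T) * (I T - I (T/2))) := by ring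
      _ = |b| * Real.exp (-T) + (2 * Real.exp (-(T/2)) * I (T/2)
            + 2 * (I T - I (T/2))) := by rw [hE1, hE2]; ring
      _ ≤ G T := by
          rw [hG]
          simp only
          have g1 : 2 * Real.exp (-(T/2)) * I (T/2) ≤ 2 * Real.exp (-(T/2)) * L := by
            apply mul_le_mul_of_nonneg_left (hIle _ hT2)
            positivity
          have g2 : I T ≤ L := hIle T hT
          linarith
  have hGz : Tendsto G atTop (𝓝 0) := by
    have c1 : Tendsto (fun T : ℝ => |b| * Real.exp (-T)) atTop (𝓝 (|b| * 0)) :=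
      Real.tendsto_exp_neg_atTop_nhds_zero.const_mul _
    have hdiv : Tendsto (fun T : ℝ => T/2) atTop atTop :=
      tendsto_id.atTop_div_const two_pos
    have c2 : Tendsto (fun T : ℝ => 2 * Real.exp (-(T/2)) * L) atTop (𝓝 (2 * 0 * L)) :=
      ((Real.tendsto_exp_neg_atTop_nhds_zero.comp hdiv).const_mul 2).mul_const L
    have c3 : Tendsto (fun T : ℝ => 2 * (L - I (T/2))) atTop (𝓝 (2 * (L - L))) :=
      (tendsto_const_nhds.sub (hIL.comp hdiv)).const_mul 2
    have := c1.add (c2.add c3)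
    simpa using this
  have habsx : Tendsto (fun T => |x T|) atTop (𝓝 0) := by
    apply squeeze_zero' (g := G)
    · filter_upwards [eventually_ge_atTop (0:ℝ)] with T hT using abs_nonneg _
    · filter_upwards [eventually_ge_atTop (0:ℝ)] with T hT using hbound T hT
    · exact hGz
  have : Tendsto (fun T => ‖x T‖) atTop (𝓝 0) := by simpa [Real.norm_eq_abs] using habsx
  exact tendsto_zero_iff_norm_tendsto_zero.2 this

end ScalarEx

open ScalarEx

theorem example_Vinf_eq_neg_b (X : (ℝ → ℝ) → ℝ → ℝ → ℝ)
    (hX : ∀ u ∈ Uc, ∀ b t : ℝ, X u b t = b + ∫ s in (0:ℝ)..t, (2 * u s - X u b s)) :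
    (∀ b : ℝ,
      sInf {e : EReal | ∃ u ∈ Uc,
          e = Filter.liminf (fun T : ℝ => ((Jc X u b T : ℝ) : EReal)) Filter.atTop}
        = ((-b : ℝ) : EReal)) ∧
    ∀ b : ℝ, ∀ u ∈ Uc, ∀ c : ℝ, Tendsto (fun T : ℝ => Jc X u b T) atTop (𝓝 c) →
      MeasureTheory.IntegrableOn u (Set.Ici 0) ∧
      Tendsto (fun T : ℝ => X u b T) atTop (𝓝 0) ∧
      b + c = ∫ s in Set.Ici (0:ℝ), |u s| ∧
      0 ≤ b + c := by
  have habs2 : ∀ u : ℝ → ℝ, u ∈ Uc → ∀ t : ℝ, |u t| ≤ 1/2 := fun u hu t =>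
    abs_le.2 ⟨(hu.2 t).1, (hu.2 t).2⟩
  constructor
  · -- value function equals -b
    intro b
    apply le_antisymm
    · -- upper bound via u ≡ 0
      apply sInf_le
      have hu0 : (fun _ : ℝ => (0:ℝ)) ∈ Uc :=
        ⟨measurable_const, fun t => by norm_num⟩
      refine ⟨(fun _ : ℝ => (0:ℝ)), hu0, ?_⟩
      set x := X (fun _ : ℝ => (0:ℝ)) b with hxdef
      have hx : ∀ τ : ℝ, x τ = b + ∫ s in (0:ℝ)..τ, (2 * (0:ℝ) - x s) := by
        intro τ
        simpa using hX _ hu0 b τ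
      have hu1 : Measurable (fun _ : ℝ => (0:ℝ)) := measurable_const
      have hu2 : ∀ t : ℝ, |(fun _ : ℝ => (0:ℝ)) t| ≤ 1/2 := fun t => by norm_num
      have hxT : ∀ T : ℝ, 0 ≤ T → x T = b * Real.exp (-T) := by
        intro T hT
        have h1 := xexp (u := fun _ => (0:ℝ)) (b := b) (x := x) hx hu1 hu2 hT
        simpa [mul_comm] using h1
      have hJ : ∀ T : ℝ, 0 ≤ T → Jc X (fun _ => (0:ℝ)) b T = b * Real.exp (-T) - b := by
        intro T hT
        have h1 := cost_eq (u := fun _ => (0:ℝ)) (b := b) (x := x) hu1 hu2 hx hT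
        have h2 : Jc X (fun _ => (0:ℝ)) b T
            = ∫ s in (0:ℝ)..T, (2 * (0:ℝ) + |(0:ℝ)| - x s) := by
          rw [Jc]
        rw [h2]
        simp only [abs_zero] at h1 ⊢
        rw [h1, hxT T hT]
        simp
      have hTend : Tendsto (fun T => Jc X (fun _ => (0:ℝ)) b T) atTop (𝓝 (-b)) := by
        have h1 : Tendsto (fun T : ℝ => b * Real.exp (-T) - b) atTop (𝓝 (b * 0 - b)) :=
          (Real.tendsto_exp_neg_atTop_nhds_zero.const_mul b).sub_const b
        rw [mul_zero, zero_sub] at h1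
        apply h1.congr'
        filter_upwards [eventually_ge_atTop (0:ℝ)] with T hT
        exact (hJ T hT).symm
      exact ((EReal.tendsto_coe.2 hTend).liminf_eq).symm
    · -- lower bound
      apply le_sInf
      rintro e ⟨u, hu, rfl⟩
      have hu1 : Measurable u := hu.1
      have hu2 : ∀ t, |u t| ≤ 1/2 := habs2 u hu
      set x := X u b with hxdef
      have hx : ∀ τ : ℝ, x τ = b + ∫ s in (0:ℝ)..τ, (2 * u s - x s) := hX u hu b
      have hJc : ∀ T : ℝ, 0 ≤ T →
          Jc X u b T = x T - b + ∫ s in (0:ℝ)..T, |u s| := fun T hT =>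
        cost_eq hu1 hu2 hx hT
      by_cases hcase : IntegrableOn u (Ioi (0:ℝ))
      · have habs : IntegrableOn (fun s => |u s|) (Ioi (0:ℝ)) := hcase.abs
        set L : ℝ := ∫ s in Ioi (0:ℝ), |u s| with hLdef
        have hL0 : 0 ≤ L := setIntegral_nonneg measurableSet_Ioi fun s _ => abs_nonneg _
        have hxz : Tendsto x atTop (𝓝 0) := tendstoZero hu1 hu2 hx habs
        have hIL : Tendsto (fun T => ∫ s in (0:ℝ)..T, |u s|) atTop (𝓝 L) :=
          intervalIntegral_tendsto_integral_Ioi 0 habs tendsto_id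
        have hTend : Tendsto (fun T => Jc X u b T) atTop (𝓝 (0 - b + L)) := by
          apply Tendsto.congr' _ ((hxz.sub_const b).add hIL)
          filter_upwards [eventually_ge_atTop (0:ℝ)] with T hT
          exact (hJc T hT).symm
        rw [(EReal.tendsto_coe.2 hTend).liminf_eq]
        exact EReal.coe_le_coe_iff.2 (by linarith)
      · have hItop := Itop hu1 hu2 hcase
        have hJtop : Tendsto (fun T => Jc X u b T) atTop atTop := by
          apply tendsto_atTop_mono' atTop ?_ (tendsto_atTop_add_const_right atTop
            (-(|b| + 1) - b) hItop)
          filter_upwards [eventually_ge_atTop (0:ℝ)] with T hT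
          have h1 := hJc T hT
          have h2 := xbound hu1 hu2 hx hT
          have h3 := abs_le.1 h2
          linarith
        have hT : Tendsto (fun T : ℝ => ((Jc X u b T : ℝ) : EReal)) atTop (𝓝 ⊤) := by
          rw [EReal.tendsto_nhds_top_iff_real]
          intro r
          filter_upwards [hJtop.eventually_gt_atTop r] with T h
          exact EReal.coe_lt_coe_iff.2 h
        rw [hT.liminf_eq]
        exact le_top
  · -- characterization of finite limits
    intro b u hu c hc
    have hu1 : Measurable u := hu.1
    have hu2 : ∀ t, |u t| ≤ 1/2 := habs2 u hu
    set x := X u b with hxdef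
    have hx : ∀ τ : ℝ, x τ = b + ∫ s in (0:ℝ)..τ, (2 * u s - x s) := hX u hu b
    set I : ℝ → ℝ := fun T => ∫ s in (0:ℝ)..T, |u s| with hIdef
    have hJc : ∀ T : ℝ, 0 ≤ T → Jc X u b T = x T - b + I T := fun T hT =>
      cost_eq hu1 hu2 hx hT
    obtain ⟨T₀, hT₀⟩ := eventually_atTop.1 (hc.eventually_le_const (lt_add_one c))
    set T₁ : ℝ := max T₀ 0 with hT₁def
    have hT₁0 : (0:ℝ) ≤ T₁ := le_max_right _ _
    have hIbdd : ∀ T : ℝ, I T ≤ max (c + 1 + b + (|b| + 1)) (I T₁) := by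
      intro T
      rcases le_or_gt T T₁ with h | h
      · exact le_trans (Imono hu1 hu2 h) (le_max_right _ _)
      · have hT : (0:ℝ) ≤ T := le_trans hT₁0 h.le
        have h1 := hJc T hT
        have h2 := (abs_le.1 (xbound hu1 hu2 hx hT)).1
        have h3 := hT₀ T (le_trans (le_max_left _ _) h.le)
        refine le_trans ?_ (le_max_left _ _)
        linarith
    have hIoi : IntegrableOn u (Ioi (0:ℝ)) := by
      apply integrableOn_Ioi_of_intervalIntegral_norm_bounded
        (max (c + 1 + b + (|b| + 1)) (I T₁)) 0
        (fun n : ℕ => (intervalIntegrable_iff_integrableOn_Ioc_of_le (Nat.cast_nonneg n)).1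
          (bddInt hu1 hu2 0 n))
        tendsto_natCast_atTop_atTop
      · refine Eventually.of_forall fun n => ?_
        simpa [Real.norm_eq_abs] using hIbdd (n : ℝ)
    have hIci : IntegrableOn u (Ici (0:ℝ)) := (integrableOn_Ici_iff_integrableOn_Ioi (by simp)).2 hIoi
    have habs : IntegrableOn (fun s => |u s|) (Ioi (0:ℝ)) := hIoi.abs
    set L : ℝ := ∫ s in Ioi (0:ℝ), |u s| with hLdef
    have hL0 : 0 ≤ L := setIntegral_nonneg measurableSet_Ioi fun s _ => abs_nonneg _
    have hxz : Tendsto x atTop (𝓝 0) := tendstoZero hu1 hu2 hx habs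
    have hIL : Tendsto I atTop (𝓝 L) :=
      intervalIntegral_tendsto_integral_Ioi 0 habs tendsto_id
    have hIL' : Tendsto I atTop (𝓝 (c + b - 0)) := by
      apply Tendsto.congr' _ (((hc.add_const b).sub hxz))
      filter_upwards [eventually_ge_atTop (0:ℝ)] with T hT
      have := hJc T hT
      linarith
    have hcbL : c + b - 0 = L := tendsto_nhds_unique hIL' hIL
    have hIciL : ∫ s in Ici (0:ℝ), |u s| = L := by
      rw [hLdef]
      exact MeasureTheory.integral_Ici_eq_integral_Ioi
    exact ⟨hIci, hxz, by rw [hIciL]; linarith, by linarith⟩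

end
end

section
/- For the scalar control system ẋ = 2u − x with running cost f₀(t,x,u) = 2u + |u| − x and control set P = [−1/2, 1/2], the finite-horizon value function V^T(0,b) := inf_{u ∈ 𝕌} J(0,b;u,T) satisfies, for all T > 1 and b ∈ ℝ, V^T(0,b) = b e^{−T} − 1/2 − b + (ln 2)/2; consequently V^all(0,b) := lim_{T→∞} V^T(0,b) = −b + (ln 2 − 1)/2, and hence V^all(0,b) < V^inf(0,b) = −b for every b ∈ ℝ, where V^inf(t,b) := inf_{u ∈ 𝕌} liminf_{T→∞} J(t,b;u,T). -/
open Filter Topology MeasureTheory Metric Set Bornology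
open scoped RealInnerProductSpace Classical

noncomputable section

variable {P : Type*} [MetricSpace P] [MeasurableSpace P] [BorelSpace P]
  [CompleteSpace P] [TopologicalSpace.SeparableSpace P] [Nonempty P]
variable {F : Type*} [NormedAddCommGroup F] [NormedSpace ℝ F] [CompleteSpace F]

section AuxScalarExample

lemma II_bdd {f : ℝ → ℝ} (hm : Measurable f) {C : ℝ} (hC : ∀ s, |f s| ≤ C) (a b : ℝ) :
    IntervalIntegrable f volume a b := by
  rw [intervalIntegrable_iff]
  apply Measure.integrableOn_of_bounded
  · exact ((measure_mono (Set.uIoc_subset_uIcc)).trans_lt measure_Icc_lt_top).ne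
  · exact hm.aestronglyMeasurable
  · exact Filter.Eventually.of_forall fun s => by simpa [Real.norm_eq_abs] using hC s

lemma uc_bdd {u : ℝ → ℝ} (hu : u ∈ Uc) : ∀ s, |u s| ≤ 1/2 := fun s => abs_le.2 (hu.2 s)

lemma uc_II {u : ℝ → ℝ} (hu : u ∈ Uc) {φ : ℝ → ℝ} (hφ : Continuous φ) {C : ℝ}
    (hC : ∀ s, |φ s| ≤ C) (a b : ℝ) :
    IntervalIntegrable (fun s => φ s * u s) volume a b := by
  apply II_bdd (hφ.measurable.mul hu.1) (C := C * (1/2))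
  intro s
  rw [Pi.mul_apply, abs_mul]
  exact mul_le_mul (hC s) (uc_bdd hu s) (abs_nonneg _) ((abs_nonneg _).trans (hC s))

lemma uc_abs_II {u : ℝ → ℝ} (hu : u ∈ Uc) (a b : ℝ) :
    IntervalIntegrable (fun s => |u s|) volume a b :=
  II_bdd hu.1.abs (fun s => by simpa using uc_bdd hu s) a b

lemma II_bdd_on {f : ℝ → ℝ} {a c : ℝ} (hac : a ≤ c)
    (hm : AEStronglyMeasurable f (volume.restrict (Ioc a c))) {C : ℝ}
    (hC : ∀ s ∈ Ioc a c, |f s| ≤ C) : IntervalIntegrable f volume a c := by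
  rw [intervalIntegrable_iff_integrableOn_Ioc_of_le hac]
  haveI : IsFiniteMeasure (volume.restrict (Ioc a c)) :=
    ⟨by rw [Measure.restrict_apply_univ]; exact measure_Ioc_lt_top⟩
  exact ⟨hm, HasFiniteIntegral.of_bounded (C := C) ((ae_restrict_iff' measurableSet_Ioc).2
    (.of_forall fun s hs => by rw [Real.norm_eq_abs]; exact hC s hs))⟩

variable {X : (ℝ → ℝ) → ℝ → ℝ → ℝ} {u : ℝ → ℝ} {b : ℝ}

lemma cont_of_II (hX : ∀ t : ℝ, X u b t = b + ∫ s in (0:ℝ)..t, (2 * u s - X u b s))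
    {t₁ : ℝ} (ht : 0 ≤ t₁)
    (hint : IntervalIntegrable (fun s => 2 * u s - X u b s) volume 0 t₁) :
    ContinuousOn (X u b) (Icc 0 t₁) := by
  have hprim := intervalIntegral.continuousOn_primitive_interval' hint
    (a := 0) (by simp [Set.uIcc_of_le ht, ht])
  rw [Set.uIcc_of_le ht] at hprim
  exact (continuousOn_const.add hprim).congr fun t _ => hX t

lemma bound_of_II (hX : ∀ t : ℝ, X u b t = b + ∫ s in (0:ℝ)..t, (2 * u s - X u b s))
    (hu : u ∈ Uc) {t₁ t₂ : ℝ} (ht : 0 ≤ t₁) (h12 : t₁ < t₂)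
    (hint : IntervalIntegrable (fun s => 2 * u s - X u b s) volume 0 t₂)
    (hcont : ContinuousOn (X u b) (Icc 0 t₂)) :
    ∀ t ∈ Icc 0 t₁, |X u b t| ≤ (1 + |b|) * Real.exp t - 1 := by
  set g := X u b with hg
  set h : ℝ → ℝ := fun s => 1 + |g s| with hh
  have ht2 : (0:ℝ) ≤ t₂ := ht.trans h12.le
  have hhc : ContinuousOn h (Icc 0 t₂) := continuousOn_const.add hcont.abs
  have hhint : ∀ r ∈ Icc (0:ℝ) t₂, IntervalIntegrable h volume 0 r := by
    intro r hr
    exact ContinuousOn.intervalIntegrable <| hhc.mono <| by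
      rw [Set.uIcc_of_le hr.1]; exact Icc_subset_Icc le_rfl hr.2
  set f : ℝ → ℝ := fun r => ∫ s in (0:ℝ)..r, h s with hf
  have hfc : ContinuousOn f (Icc 0 t₂) := by
    have := intervalIntegral.continuousOn_primitive_interval'
      (hhint t₂ ⟨ht2, le_rfl⟩) (a := 0) (by simp [Set.uIcc_of_le ht2, ht2])
    rwa [Set.uIcc_of_le ht2] at this
  have hfnonneg : ∀ r ∈ Icc (0:ℝ) t₂, 0 ≤ f r := by
    intro r hr
    exact intervalIntegral.integral_nonneg hr.1 fun s _ => by positivity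
  have hgb : ∀ r ∈ Icc (0:ℝ) t₂, |g r| ≤ |b| + f r := by
    intro r hr
    have h1 : g r = b + ∫ s in (0:ℝ)..r, (2 * u s - g s) := hX r
    have hFr : IntervalIntegrable (fun s => 2 * u s - g s) volume 0 r :=
      hint.mono_set <| by
        rw [Set.uIcc_of_le hr.1, Set.uIcc_of_le ht2]
        exact Icc_subset_Icc le_rfl hr.2
    have h2 : |∫ s in (0:ℝ)..r, (2 * u s - g s)| ≤ ∫ s in (0:ℝ)..r, |2 * u s - g s| :=
      intervalIntegral.abs_integral_le_integral_abs hr.1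
    have h3 : ∫ s in (0:ℝ)..r, |2 * u s - g s| ≤ f r := by
      apply intervalIntegral.integral_mono_on hr.1 hFr.abs (hhint r hr)
      intro s _
      calc |2 * u s - g s| ≤ |2 * u s| + |g s| := by
            rw [sub_eq_add_neg]
            exact (abs_add_le _ _).trans_eq (by rw [abs_neg])
        _ ≤ 1 + |g s| := by
            have h4 := uc_bdd hu s
            rw [abs_mul, abs_two]
            nlinarith [abs_nonneg (u s), abs_nonneg (g s)]
    calc |g r| ≤ |b| + |∫ s in (0:ℝ)..r, (2 * u s - g s)| := by
          rw [h1]; exact abs_add_le _ _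
      _ ≤ |b| + f r := by linarith
  have hder : ∀ r ∈ Ico (0:ℝ) t₁, HasDerivWithinAt f (h r) (Ici r) r := by
    intro r hr
    have hrmem : r ∈ Icc (0:ℝ) t₂ := ⟨hr.1, hr.2.le.trans h12.le⟩
    have hrlt : r < t₂ := lt_of_lt_of_le hr.2 h12.le
    have hIcc : Icc 0 t₂ ∈ 𝓝[>] r :=
      Filter.mem_of_superset (Icc_mem_nhdsGT_of_mem ⟨le_rfl, hrlt⟩)
        (Icc_subset_Icc hr.1 le_rfl)
    apply intervalIntegral.integral_hasDerivWithinAt_right (hhint r hrmem)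
    · exact ⟨Icc 0 t₂, hIcc, hhc.aestronglyMeasurable measurableSet_Icc⟩
    · exact (hhc r hrmem).mono_of_mem_nhdsWithin hIcc
  have hbound : ∀ r ∈ Ico (0:ℝ) t₁, ‖h r‖ ≤ 1 * ‖f r‖ + (1 + |b|) := by
    intro r hr
    have hrmem : r ∈ Icc (0:ℝ) t₂ := ⟨hr.1, hr.2.le.trans h12.le⟩
    have h5 := hgb r hrmem
    rw [Real.norm_eq_abs, Real.norm_eq_abs, abs_of_nonneg (hfnonneg r hrmem),
      abs_of_nonneg (by positivity : (0:ℝ) ≤ h r)]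
    simp only [hh]; linarith
  have hGW := norm_le_gronwallBound_of_norm_deriv_right_le (δ := 0) (K := 1) (ε := 1 + |b|)
    (hfc.mono (Icc_subset_Icc le_rfl h12.le)) hder (by simp [hf]) hbound
  intro t htmem
  have h6 := hGW t htmem
  have htm2 : t ∈ Icc (0:ℝ) t₂ := ⟨htmem.1, htmem.2.trans h12.le⟩
  rw [Real.norm_eq_abs, abs_of_nonneg (hfnonneg t htm2),
    gronwallBound_of_K_ne_0 one_ne_zero] at h6
  have h7 : f t ≤ (1 + |b|) * (Real.exp t - 1) := by
    simp only [one_mul, sub_zero, zero_mul, zero_add, div_one] at h6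
    linarith
  have h8 := hgb t htm2
  nlinarith [abs_nonneg b]

lemma XF_int (hXe : ∀ t : ℝ, X u b t = b + ∫ s in (0:ℝ)..t, (2 * u s - X u b s))
    (hu : u ∈ Uc) :
    ∀ T : ℝ, 0 ≤ T → IntervalIntegrable (fun s => 2 * u s - X u b s) volume 0 T := by
  set g := X u b with hg
  set F : ℝ → ℝ := fun s => 2 * u s - g s with hF
  by_contra hcon
  push_neg at hcon
  obtain ⟨T₀, hT₀, hTbad⟩ := hcon
  set Sbad : Set ℝ := {t | 0 ≤ t ∧ ¬ IntervalIntegrable F volume 0 t} with hSbad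
  have hne : Sbad.Nonempty := ⟨T₀, hT₀, hTbad⟩
  have hbdd : BddBelow Sbad := ⟨0, fun t ht => ht.1⟩
  set c := sInf Sbad with hc
  have hc0 : 0 ≤ c := le_csInf hne fun t ht => ht.1
  have hlt : ∀ t, 0 ≤ t → t < c → IntervalIntegrable F volume 0 t := by
    intro t ht htc
    by_contra hni
    exact absurd (csInf_le hbdd ⟨ht, hni⟩) (not_le.2 htc)
  have hgtc : ∀ t, c < t → ¬ IntervalIntegrable F volume 0 t := by
    intro t htc hi
    obtain ⟨t', ht', ht'lt⟩ := exists_lt_of_csInf_lt hne htc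
    refine ht'.2 (hi.mono_set ?_)
    rw [Set.uIcc_of_le ht'.1, Set.uIcc_of_le (hc0.trans htc.le)]
    exact Icc_subset_Icc le_rfl ht'lt.le
  have hjunk : ∀ t, c < t → g t = b := by
    intro t htc
    rw [hXe t, intervalIntegral.integral_undef (hgtc t htc), add_zero]
  have hcontIco : ContinuousOn g (Ico 0 c) := by
    intro t htmem
    have h2 : (t + c)/2 < c := by linarith [htmem.2]
    have h2' : t < (t+c)/2 := by linarith [htmem.2]
    have h20 : (0:ℝ) ≤ (t+c)/2 := by linarith [htmem.1]
    have hci := cont_of_II hXe h20 (hlt _ h20 h2)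
    have hmem : Icc 0 ((t+c)/2) ∈ 𝓝[Ico 0 c] t := by
      rw [mem_nhdsWithin_iff_exists_mem_nhds_inter]
      exact ⟨Iio ((t+c)/2), Iio_mem_nhds h2', fun s hs => ⟨hs.2.1, hs.1.le⟩⟩
    exact (hci t ⟨htmem.1, h2'.le⟩).mono_of_mem_nhdsWithin hmem
  set B : ℝ := (1 + |b|) * Real.exp c with hB
  have hbnd : ∀ t ∈ Ico (0:ℝ) c, |g t| ≤ B := by
    intro t htmem
    have h2 : (t + c)/2 < c := by linarith [htmem.2]
    have h2' : t < (t+c)/2 := by linarith [htmem.2]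
    have h20 : (0:ℝ) ≤ (t+c)/2 := by linarith [htmem.1]
    have hb2 := bound_of_II hXe hu (t₁ := t) (t₂ := (t+c)/2) htmem.1 h2'
      (hlt _ h20 h2) (cont_of_II hXe h20 (hlt _ h20 h2)) t ⟨htmem.1, le_rfl⟩
    have hee : Real.exp t ≤ Real.exp c := Real.exp_le_exp.2 htmem.2.le
    nlinarith [abs_nonneg b, Real.exp_pos t]
  have hm1 : AEStronglyMeasurable g (volume.restrict (Ioo 0 c)) :=
    (hcontIco.mono Ioo_subset_Ico_self).aestronglyMeasurable measurableSet_Ioo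
  have hint1 : IntegrableOn F (Ioo 0 c) volume := by
    haveI : IsFiniteMeasure (volume.restrict (Ioo (0:ℝ) c)) :=
      ⟨by rw [Measure.restrict_apply_univ]; exact measure_Ioo_lt_top⟩
    refine ⟨((hu.1.const_mul 2).aestronglyMeasurable.restrict).sub hm1, ?_⟩
    apply HasFiniteIntegral.of_bounded (C := 1 + B)
    refine (ae_restrict_iff' measurableSet_Ioo).2 (.of_forall fun s hs => ?_)
    have h3 := hbnd s ⟨hs.1.le, hs.2⟩
    have hus := uc_bdd hu s
    rw [Real.norm_eq_abs]
    calc |2 * u s - g s| ≤ |2 * u s| + |g s| := by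
          rw [sub_eq_add_neg]
          exact (abs_add_le _ _).trans_eq (by rw [abs_neg])
      _ ≤ 1 + B := by rw [abs_mul, abs_two]; linarith
  have hint2 : IntegrableOn F (Ioc c (c+1)) volume := by
    have heq : EqOn (fun s => 2 * u s - b) F (Ioc c (c+1)) := fun s hs => by
      simp [hF, hjunk s hs.1]
    apply IntegrableOn.congr_fun ?_ heq measurableSet_Ioc
    have h4 := II_bdd (f := fun s => 2 * u s - b)
      ((hu.1.const_mul 2).sub measurable_const) (C := 1 + |b|)
      (fun s => by
        have hus := uc_bdd hu s
        calc |2 * u s - b| ≤ |2 * u s| + |b| := by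
              rw [sub_eq_add_neg]
              exact (abs_add_le _ _).trans_eq (by rw [abs_neg])
          _ ≤ 1 + |b| := by rw [abs_mul, abs_two]; linarith) c (c+1)
    rwa [intervalIntegrable_iff_integrableOn_Ioc_of_le (by linarith)] at h4
  have hunion : IntegrableOn F (Ioo 0 c ∪ Ioc c (c+1)) volume := hint1.union hint2
  have haes : (Ioc (0:ℝ) (c+1) : Set ℝ) ≤ᵐ[volume] ((Ioo (0:ℝ) c ∪ Ioc c (c+1)) : Set ℝ) := by
    have hnec : ∀ᵐ s : ℝ, s ∉ ({c} : Set ℝ) := compl_mem_ae_iff.2 (measure_singleton c)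
    filter_upwards [hnec] with s hs
    intro hsmem
    have hne2 : s ≠ c := fun h => hs (by simp [h])
    show s ∈ Ioo (0:ℝ) c ∪ Ioc c (c+1)
    rcases lt_or_gt_of_ne hne2 with h | h
    · exact Or.inl ⟨hsmem.1, h⟩
    · exact Or.inr ⟨h, hsmem.2⟩
  have hfin : IntegrableOn F (Ioc 0 (c+1)) volume := hunion.mono_set_ae haes
  exact hgtc (c+1) (by linarith)
    ((intervalIntegrable_iff_integrableOn_Ioc_of_le (by linarith)).2 hfin)

lemma X_contOn (hXe : ∀ t : ℝ, X u b t = b + ∫ s in (0:ℝ)..t, (2 * u s - X u b s))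
    (hu : u ∈ Uc) {T : ℝ} (hT : 0 ≤ T) : ContinuousOn (X u b) (Icc 0 T) :=
  cont_of_II hXe hT (XF_int hXe hu T hT)

lemma X_bound (hXe : ∀ t : ℝ, X u b t = b + ∫ s in (0:ℝ)..t, (2 * u s - X u b s))
    (hu : u ∈ Uc) {T : ℝ} (hT : 0 ≤ T) :
    ∀ t ∈ Icc 0 T, |X u b t| ≤ (1 + |b|) * Real.exp t - 1 :=
  bound_of_II hXe hu hT (lt_add_one T) (XF_int hXe hu (T+1) (by linarith))
    (X_contOn hXe hu (by linarith))

lemma X_formula (hXe : ∀ t : ℝ, X u b t = b + ∫ s in (0:ℝ)..t, (2 * u s - X u b s))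
    (hu : u ∈ Uc) {T : ℝ} (hT : 0 ≤ T) :
    Real.exp T * X u b T = b + ∫ s in (0:ℝ)..T, 2 * Real.exp s * u s := by
  set g := X u b with hg
  set F : ℝ → ℝ := fun s => 2 * u s - g s with hF
  have hFint : IntervalIntegrable F volume 0 T := XF_int hXe hu T hT
  have hgc : ContinuousOn g (Icc 0 T) := cont_of_II hXe hT hFint
  have hbd := X_bound hXe hu hT
  have hFb : ∀ s ∈ Icc (0:ℝ) T, |F s| ≤ 1 + (1 + |b|) * Real.exp T := by
    intro s hs
    have h1 := hbd s hs
    have h2 := uc_bdd hu s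
    have h3 : Real.exp s ≤ Real.exp T := Real.exp_le_exp.2 hs.2
    have h4 : (0:ℝ) < 1 + |b| := by positivity
    calc |F s| ≤ |2 * u s| + |g s| := by
          simp only [hF]
          rw [sub_eq_add_neg]
          exact (abs_add_le _ _).trans_eq (by rw [abs_neg])
      _ ≤ 1 + (1 + |b|) * Real.exp T := by
          rw [abs_mul, abs_two]
          nlinarith
  set G : ℝ → ℝ := fun t => ∫ s in (0:ℝ)..t, F s with hGdef
  have hGc : ContinuousOn G (Icc 0 T) := by
    have := intervalIntegral.continuousOn_primitive_interval' hFint (a := 0)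
      (by simp [Set.uIcc_of_le hT, hT])
    rwa [Set.uIcc_of_le hT] at this
  have hFsm : AEStronglyMeasurable F (volume.restrict (Ioc (0:ℝ) T)) :=
    ((hu.1.const_mul 2).aestronglyMeasurable.restrict).sub
      ((hgc.mono Ioc_subset_Icc_self).aestronglyMeasurable measurableSet_Ioc)
  -- KEY Fubini identity
  have KEY : ∫ s in (0:ℝ)..T, Real.exp s * G s
      = ∫ r in (0:ℝ)..T, (Real.exp T - Real.exp r) * F r := by
    rcases eq_or_lt_of_le hT with h0 | hTpos
    · rw [← h0]; simp
    set μT := volume.restrict (Ioc (0:ℝ) T) with hμT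
    haveI : IsFiniteMeasure μT := ⟨by rw [Measure.restrict_apply_univ]; exact measure_Ioc_lt_top⟩
    set f : ℝ → ℝ → ℝ := fun s r => if r ≤ s then Real.exp s * F r else 0 with hfdef
    have huncurry : Function.uncurry f
        = ({p : ℝ × ℝ | p.2 ≤ p.1}).indicator (fun p => Real.exp p.1 * F p.2) := by
      funext p
      rw [Set.indicator_apply]
      rfl
    have hfint : Integrable (Function.uncurry f) (μT.prod μT) := by
      rw [huncurry]
      apply Integrable.indicator _ (measurableSet_le measurable_snd measurable_fst)
      refine ⟨(Real.continuous_exp.comp continuous_fst).aestronglyMeasurable.mul hFsm.comp_snd, ?_⟩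
      apply HasFiniteIntegral.of_bounded
        (C := Real.exp T * (1 + (1 + |b|) * Real.exp T))
      rw [hμT, Measure.prod_restrict]
      refine (ae_restrict_iff' (measurableSet_Ioc.prod measurableSet_Ioc)).2
        (.of_forall fun p hp => ?_)
      have h1 := hFb p.2 ⟨hp.2.1.le, hp.2.2⟩
      have h2 : Real.exp p.1 ≤ Real.exp T := Real.exp_le_exp.2 hp.1.2
      have h3 : (0:ℝ) < Real.exp p.1 := Real.exp_pos _
      have h4 : (0:ℝ) ≤ 1 + (1 + |b|) * Real.exp T := by positivity
      rw [Real.norm_eq_abs, abs_mul, abs_of_pos h3]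
      exact mul_le_mul h2 h1 (abs_nonneg _) (Real.exp_pos T).le
    have swap := MeasureTheory.integral_integral_swap hfint
    have lhs1 : ∫ s in (0:ℝ)..T, Real.exp s * G s = ∫ s, (∫ r, f s r ∂μT) ∂μT := by
      rw [intervalIntegral.integral_of_le hT]
      apply setIntegral_congr_fun measurableSet_Ioc
      intro s hs
      have hGs : G s = ∫ r in Ioc (0:ℝ) T, (Ioc (0:ℝ) s).indicator F r := by
        rw [setIntegral_indicator measurableSet_Ioc]
        have hinter : Ioc (0:ℝ) T ∩ Ioc (0:ℝ) s = Ioc (0:ℝ) s := by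
          ext r
          simp only [Set.mem_inter_iff, Set.mem_Ioc]
          exact ⟨fun h => h.2, fun h => ⟨⟨h.1, h.2.trans hs.2⟩, h⟩⟩
        rw [hinter, hGdef]
        simp [intervalIntegral.integral_of_le hs.1.le]
      have hcong : ∀ r ∈ Ioc (0:ℝ) T,
          Real.exp s * (Ioc (0:ℝ) s).indicator F r = f s r := by
        intro r hr
        rw [Set.indicator_apply, hfdef]
        by_cases hrs : r ≤ s
        · simp [hr.1, hrs]
        · simp [hrs]
      calc Real.exp s * G s = ∫ r in Ioc (0:ℝ) T, Real.exp s * (Ioc (0:ℝ) s).indicator F r := by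
            rw [hGs, integral_const_mul]
        _ = ∫ r, f s r ∂μT := setIntegral_congr_fun measurableSet_Ioc hcong
    have rhs1 : ∫ r, (∫ s, f s r ∂μT) ∂μT = ∫ r in (0:ℝ)..T, (Real.exp T - Real.exp r) * F r := by
      rw [intervalIntegral.integral_of_le hT]
      apply setIntegral_congr_fun measurableSet_Ioc
      intro r hr
      have hcong : ∀ s ∈ Ioc (0:ℝ) T,
          f s r = (Icc r T).indicator Real.exp s * F r := by
        intro s hs
        rw [Set.indicator_apply, hfdef]
        by_cases hrs : r ≤ s
        · simp [hrs, Set.mem_Icc, hs.2]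
        · simp [hrs, Set.mem_Icc]
      calc (∫ s, f s r ∂μT) = ∫ s in Ioc (0:ℝ) T, (Icc r T).indicator Real.exp s * F r :=
            setIntegral_congr_fun measurableSet_Ioc hcong
        _ = (∫ s in Ioc (0:ℝ) T, (Icc r T).indicator Real.exp s) * F r := integral_mul_const _ _
        _ = (Real.exp T - Real.exp r) * F r := by
            rw [setIntegral_indicator measurableSet_Icc]
            have hinter : Ioc (0:ℝ) T ∩ Icc r T = Icc r T := by
              ext s
              simp only [Set.mem_inter_iff, Set.mem_Ioc, Set.mem_Icc]
              exact ⟨fun h => h.2, fun h => ⟨⟨hr.1.trans_le h.1, h.2⟩, h⟩⟩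
            rw [hinter, integral_Icc_eq_integral_Ioc,
              ← intervalIntegral.integral_of_le hr.2, integral_exp]
    rw [lhs1, swap, rhs1]
  -- final assembly
  have hIccuIcc : uIcc (0:ℝ) T = Icc 0 T := Set.uIcc_of_le hT
  have hgII : IntervalIntegrable (fun s => Real.exp s * g s) volume 0 T :=
    (Real.continuous_exp.continuousOn.mul (hgc.mono (by rw [hIccuIcc]))).intervalIntegrable
  have hGII : IntervalIntegrable (fun s => Real.exp s * G s) volume 0 T := by
    apply ContinuousOn.intervalIntegrable
    rw [hIccuIcc]
    exact Real.continuous_exp.continuousOn.mul hGc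
  have heFII : IntervalIntegrable (fun s => Real.exp s * F s) volume 0 T := by
    apply II_bdd_on hT
    · exact Real.continuous_exp.aestronglyMeasurable.mul hFsm
    · intro s hs
      have h1 := hFb s ⟨hs.1.le, hs.2⟩
      have h2 : Real.exp s ≤ Real.exp T := Real.exp_le_exp.2 hs.2
      rw [abs_mul, abs_of_pos (Real.exp_pos s)]
      exact mul_le_mul h2 h1 (abs_nonneg _) (Real.exp_pos T).le
  have heTFII : IntervalIntegrable (fun s => Real.exp T * F s) volume 0 T :=
    hFint.const_mul _
  have h1 : ∫ s in (0:ℝ)..T, 2 * Real.exp s * u s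
      = (∫ s in (0:ℝ)..T, Real.exp s * F s) + ∫ s in (0:ℝ)..T, Real.exp s * g s := by
    rw [← intervalIntegral.integral_add heFII hgII]
    apply intervalIntegral.integral_congr
    intro s _
    simp only [hF]
    ring
  have h2 : ∫ s in (0:ℝ)..T, Real.exp s * g s
      = b * (Real.exp T - 1) + ∫ s in (0:ℝ)..T, Real.exp s * G s := by
    have hcongr : EqOn (fun s => Real.exp s * g s)
        (fun s => b * Real.exp s + Real.exp s * G s) (uIcc 0 T) := by
      intro s _
      show Real.exp s * g s = b * Real.exp s + Real.exp s * G s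
      rw [hXe s]
      ring
    rw [intervalIntegral.integral_congr hcongr,
      intervalIntegral.integral_add (f := fun s => b * Real.exp s)
        ((continuous_const.mul Real.continuous_exp).intervalIntegrable 0 T) hGII,
      intervalIntegral.integral_const_mul, integral_exp]
    norm_num
  have h3 : ∫ s in (0:ℝ)..T, Real.exp s * G s
      = Real.exp T * G T - ∫ r in (0:ℝ)..T, Real.exp r * F r := by
    rw [KEY]
    have hcongr : EqOn (fun r => (Real.exp T - Real.exp r) * F r)
        (fun r => Real.exp T * F r - Real.exp r * F r) (uIcc 0 T) := fun r _ => by ring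
    rw [intervalIntegral.integral_congr hcongr,
      intervalIntegral.integral_sub heTFII heFII, intervalIntegral.integral_const_mul]
  have hGT : G T = g T - b := by
    have := hXe T
    simp only [hGdef]
    linarith
  have h4 : Real.exp T * G T = Real.exp T * g T - Real.exp T * b := by rw [hGT]; ring
  linarith


lemma J_formula (hXe : ∀ t : ℝ, X u b t = b + ∫ s in (0:ℝ)..t, (2 * u s - X u b s))
    (hu : u ∈ Uc) {T : ℝ} (hT : 0 ≤ T) :
    Jc X u b T = b * Real.exp (-T) - b
      + ∫ s in (0:ℝ)..T, (2 * Real.exp (s - T) * u s + |u s|) := by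
  set g := X u b with hg
  set F : ℝ → ℝ := fun s => 2 * u s - g s with hF
  have hFint : IntervalIntegrable F volume 0 T := XF_int hXe hu T hT
  have habs : IntervalIntegrable (fun s => |u s|) volume 0 T := uc_abs_II hu 0 T
  have hII : IntervalIntegrable (fun s => 2 * Real.exp (s - T) * u s) volume 0 T := by
    apply II_bdd_on hT (C := 1)
    · exact (((continuous_const.mul (Real.continuous_exp.comp
        (continuous_id.sub continuous_const))).measurable.mul hu.1)).aestronglyMeasurable
    · intro s hs
      have h2 := uc_bdd hu s
      have h3 : Real.exp (s - T) ≤ 1 := Real.exp_le_one_iff.2 (by linarith [hs.2])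
      have h4 := Real.exp_pos (s - T)
      rw [abs_mul, abs_mul, abs_two, abs_of_pos h4]
      nlinarith [abs_nonneg (u s), h4.le]
  have split1 : Jc X u b T = (∫ s in (0:ℝ)..T, F s) + ∫ s in (0:ℝ)..T, |u s| := by
    rw [Jc, ← intervalIntegral.integral_add hFint habs]
    apply intervalIntegral.integral_congr
    intro s _
    simp only [hF]
    ring
  have hGT : ∫ s in (0:ℝ)..T, F s = g T - b := by
    have := hXe T
    linarith
  have hXf := X_formula hXe hu hT
  have hinv : Real.exp (-T) * Real.exp T = 1 := by rw [← Real.exp_add]; simp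
  have hgT : g T = b * Real.exp (-T)
      + Real.exp (-T) * ∫ s in (0:ℝ)..T, 2 * Real.exp s * u s := by
    calc g T = (Real.exp (-T) * Real.exp T) * g T := by rw [hinv]; ring
      _ = Real.exp (-T) * (Real.exp T * g T) := by ring
      _ = Real.exp (-T) * (b + ∫ s in (0:ℝ)..T, 2 * Real.exp s * u s) := by rw [hXf]
      _ = _ := by ring
  have hpull : Real.exp (-T) * (∫ s in (0:ℝ)..T, 2 * Real.exp s * u s)
      = ∫ s in (0:ℝ)..T, 2 * Real.exp (s - T) * u s := by
    rw [← intervalIntegral.integral_const_mul]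
    apply intervalIntegral.integral_congr
    intro s _
    show Real.exp (-T) * (2 * Real.exp s * u s) = 2 * Real.exp (s - T) * u s
    have : Real.exp (s - T) = Real.exp s * Real.exp (-T) := by
      rw [← Real.exp_add]
      ring_nf
    rw [this]
    ring
  have hsum : ∫ s in (0:ℝ)..T, (2 * Real.exp (s - T) * u s + |u s|)
      = (∫ s in (0:ℝ)..T, 2 * Real.exp (s - T) * u s) + ∫ s in (0:ℝ)..T, |u s| :=
    intervalIntegral.integral_add hII habs
  rw [split1, hGT, hsum, ← hpull, hgT]
  ring

lemma exp_pull {u : ℝ → ℝ} (T : ℝ) :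
    Real.exp (-T) * (∫ s in (0:ℝ)..T, 2 * Real.exp s * u s)
      = ∫ s in (0:ℝ)..T, 2 * Real.exp (s - T) * u s := by
  rw [← intervalIntegral.integral_const_mul]
  apply intervalIntegral.integral_congr
  intro s _
  show Real.exp (-T) * (2 * Real.exp s * u s) = 2 * Real.exp (s - T) * u s
  have h : Real.exp (s - T) = Real.exp s * Real.exp (-T) := by
    rw [← Real.exp_add]; ring_nf
  rw [h]; ring

lemma min_integral {T : ℝ} (hT : Real.log 2 ≤ T) :
    ∫ s in (0:ℝ)..T, min 0 (1/2 - Real.exp (s - T)) = Real.log 2 / 2 - 1/2 := by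
  set a := T - Real.log 2 with ha
  have hl2 : 0 < Real.log 2 := Real.log_pos (by norm_num)
  have ha0 : 0 ≤ a := by simp only [ha]; linarith
  have haT : a ≤ T := by simp only [ha]; linarith
  have hm : Continuous (fun s => min 0 (1/2 - Real.exp (s - T))) :=
    continuous_const.min (continuous_const.sub
      (Real.continuous_exp.comp (continuous_id.sub continuous_const)))
  have hsplit := intervalIntegral.integral_add_adjacent_intervals
    (hm.intervalIntegrable (μ := volume) 0 a) (hm.intervalIntegrable (μ := volume) a T)
  have hexphalf : Real.exp (a - T) = 1/2 := by
    rw [show a - T = -Real.log 2 by simp only [ha]; ring, Real.exp_neg,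
      Real.exp_log (by norm_num : (0:ℝ) < 2)]
    norm_num
  have h1 : ∫ s in (0:ℝ)..a, min 0 (1/2 - Real.exp (s - T)) = 0 := by
    have hceq : EqOn (fun s => min 0 (1/2 - Real.exp (s - T))) (fun _ => (0:ℝ)) (uIcc 0 a) := by
      intro s hsmem
      rw [Set.uIcc_of_le ha0] at hsmem
      have h6 : Real.exp (s - T) ≤ 1/2 := by
        calc Real.exp (s - T) ≤ Real.exp (a - T) :=
              Real.exp_le_exp.2 (by linarith [hsmem.2])
          _ = 1/2 := hexphalf
      exact min_eq_left (by linarith)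
    rw [intervalIntegral.integral_congr hceq]
    simp
  have h2 : ∫ s in a..T, min 0 (1/2 - Real.exp (s - T)) = Real.log 2 / 2 - 1/2 := by
    have hceq : EqOn (fun s => min 0 (1/2 - Real.exp (s - T)))
        (fun s => 1/2 - Real.exp (s - T)) (uIcc a T) := by
      intro s hsmem
      rw [Set.uIcc_of_le haT] at hsmem
      have h6 : (1:ℝ)/2 ≤ Real.exp (s - T) := by
        calc (1:ℝ)/2 = Real.exp (a - T) := hexphalf.symm
          _ ≤ Real.exp (s - T) := Real.exp_le_exp.2 (by linarith [hsmem.1])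
      exact min_eq_right (by linarith)
    have hexpII : IntervalIntegrable (fun s => Real.exp (s - T)) volume a T := by
      apply Continuous.intervalIntegrable
      continuity
    rw [intervalIntegral.integral_congr hceq,
      intervalIntegral.integral_sub (continuous_const.intervalIntegrable a T) hexpII,
      intervalIntegral.integral_const]
    have hc : ∫ s in a..T, Real.exp (s - T) = 1 - Real.exp (a - T) := by
      rw [intervalIntegral.integral_comp_sub_right _ T, integral_exp]
      simp
    rw [hc, hexphalf]
    have : T - a = Real.log 2 := by simp only [ha]; ring
    rw [this]
    simp only [smul_eq_mul]
    ring
  linarith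

lemma J_lower (hXe : ∀ t : ℝ, X u b t = b + ∫ s in (0:ℝ)..t, (2 * u s - X u b s))
    (hu : u ∈ Uc) {T : ℝ} (hT0 : 0 ≤ T) (hT : Real.log 2 ≤ T) :
    b * Real.exp (-T) - b + (Real.log 2 / 2 - 1/2) ≤ Jc X u b T := by
  rw [J_formula hXe hu hT0]
  have hm : Continuous (fun s => min 0 (1/2 - Real.exp (s - T))) :=
    continuous_const.min (continuous_const.sub
      (Real.continuous_exp.comp (continuous_id.sub continuous_const)))
  have hII : IntervalIntegrable (fun s => 2 * Real.exp (s - T) * u s + |u s|) volume 0 T := by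
    apply II_bdd_on hT0 (C := 2)
    · exact ((((continuous_const.mul (Real.continuous_exp.comp
        (continuous_id.sub continuous_const))).measurable.mul hu.1)).add
          hu.1.abs).aestronglyMeasurable
    · intro s hs
      have h2 := uc_bdd hu s
      have h3 : Real.exp (s - T) ≤ 1 := Real.exp_le_one_iff.2 (by linarith [hs.2])
      have h4 := (Real.exp_pos (s - T)).le
      have habs2 : |2 * Real.exp (s - T) * u s| ≤ 1 := by
        rw [abs_mul, abs_mul, abs_two, abs_of_nonneg h4]
        nlinarith [abs_nonneg (u s)]
      have h7 := abs_add_le (2 * Real.exp (s - T) * u s) |u s|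
      rw [abs_abs] at h7
      linarith
  have hmono : ∫ s in (0:ℝ)..T, min 0 (1/2 - Real.exp (s - T))
      ≤ ∫ s in (0:ℝ)..T, (2 * Real.exp (s - T) * u s + |u s|) := by
    apply intervalIntegral.integral_mono_on hT0 (hm.intervalIntegrable 0 T) hII
    intro s _
    have h2 := uc_bdd hu s
    have h4 := Real.exp_pos (s - T)
    have h5 := neg_abs_le (u s)
    have h6 := abs_nonneg (u s)
    rcases le_total (Real.exp (s - T)) (1/2) with h | h
    · refine le_trans (min_le_left _ _) ?_
      nlinarith
    · refine le_trans (min_le_right _ _) ?_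
      nlinarith
  have := min_integral hT
  linarith

def optU (T : ℝ) : ℝ → ℝ := fun s => if T - Real.log 2 < s ∧ s ≤ T then -(1/2) else 0

lemma optU_mem (T : ℝ) : optU T ∈ Uc := by
  constructor
  · have hset : MeasurableSet {s : ℝ | T - Real.log 2 < s ∧ s ≤ T} := by
      show MeasurableSet (Ioc (T - Real.log 2) T)
      exact measurableSet_Ioc
    exact Measurable.ite hset measurable_const measurable_const
  · intro t
    unfold optU
    split <;> constructor <;> norm_num

lemma optU_II {T c d : ℝ} (hcd : c ≤ d) {φ : ℝ → ℝ} (hφ : Continuous φ) {C : ℝ}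
    (hC : ∀ s ∈ Ioc c d, |φ s| ≤ C) :
    IntervalIntegrable (fun s => φ s * optU T s) volume c d := by
  apply II_bdd_on hcd (C := |C|)
  · exact (hφ.measurable.mul (optU_mem T).1).aestronglyMeasurable
  · intro s hs
    have h2 := uc_bdd (optU_mem T) s
    rw [abs_mul]
    calc |φ s| * |optU T s| ≤ |C| * 1 :=
          mul_le_mul ((hC s hs).trans (le_abs_self C)) (h2.trans (by norm_num))
            (abs_nonneg _) (abs_nonneg C)
      _ = |C| := mul_one _

lemma log2_lt_one : Real.log 2 < 1 := by
  have h := Real.log_lt_sub_one_of_pos (by norm_num : (0:ℝ) < 2) (by norm_num)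
  linarith

lemma optU_int1 {T : ℝ} (hT : 1 < T) :
    ∫ s in (0:ℝ)..T, 2 * Real.exp s * optU T s = -(Real.exp T) / 2 := by
  set a := T - Real.log 2 with ha
  have hl2 : 0 < Real.log 2 := Real.log_pos (by norm_num)
  have ha0 : (0:ℝ) ≤ a := by simp only [ha]; linarith [log2_lt_one]
  have haT : a ≤ T := by simp only [ha]; linarith
  have hφ : Continuous (fun s => 2 * Real.exp s) := continuous_const.mul Real.continuous_exp
  have hbnd : ∀ c d : ℝ, d ≤ T → ∀ s ∈ Ioc c d, |2 * Real.exp s| ≤ 2 * Real.exp T := by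
    intro c d hd s hs
    rw [abs_mul, abs_two, abs_of_pos (Real.exp_pos s)]
    have := Real.exp_le_exp.2 (hs.2.trans hd)
    linarith
  have hII1 : IntervalIntegrable (fun s => 2 * Real.exp s * optU T s) volume 0 a :=
    optU_II ha0 hφ (hbnd 0 a haT)
  have hII2 : IntervalIntegrable (fun s => 2 * Real.exp s * optU T s) volume a T :=
    optU_II haT hφ (hbnd a T le_rfl)
  have hsplit := intervalIntegral.integral_add_adjacent_intervals hII1 hII2
  have h1 : ∫ s in (0:ℝ)..a, 2 * Real.exp s * optU T s = 0 := by
    rw [intervalIntegral.integral_of_le ha0,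
      setIntegral_congr_fun measurableSet_Ioc (g := fun _ => (0:ℝ))]
    · simp
    · intro s hs
      show 2 * Real.exp s * optU T s = 0
      unfold optU
      rw [if_neg]
      · ring
      · rintro ⟨hlt, -⟩
        have := hs.2
        simp only [ha] at this
        linarith
  have hexpa : Real.exp a = Real.exp T / 2 := by
    rw [ha, Real.exp_sub, Real.exp_log (by norm_num : (0:ℝ) < 2)]
  have h2 : ∫ s in a..T, 2 * Real.exp s * optU T s = Real.exp a - Real.exp T := by
    rw [intervalIntegral.integral_of_le haT,
      setIntegral_congr_fun measurableSet_Ioc (g := fun s => -Real.exp s)]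
    · rw [← intervalIntegral.integral_of_le haT, intervalIntegral.integral_neg, integral_exp]
      ring
    · intro s hs
      show 2 * Real.exp s * optU T s = -Real.exp s
      unfold optU
      rw [if_pos]
      · ring
      · exact ⟨by simp only [ha] at hs; exact hs.1, hs.2⟩
  rw [← hsplit, h1, h2, hexpa]
  ring

lemma optU_int2 {T : ℝ} (hT : 1 < T) :
    ∫ s in (0:ℝ)..T, |optU T s| = Real.log 2 / 2 := by
  set a := T - Real.log 2 with ha
  have hl2 : 0 < Real.log 2 := Real.log_pos (by norm_num)
  have ha0 : (0:ℝ) ≤ a := by simp only [ha]; linarith [log2_lt_one]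
  have haT : a ≤ T := by simp only [ha]; linarith
  have hII1 := uc_abs_II (optU_mem T) 0 a
  have hII2 := uc_abs_II (optU_mem T) a T
  have hsplit := intervalIntegral.integral_add_adjacent_intervals hII1 hII2
  have h1 : ∫ s in (0:ℝ)..a, |optU T s| = 0 := by
    rw [intervalIntegral.integral_of_le ha0,
      setIntegral_congr_fun measurableSet_Ioc (g := fun _ => (0:ℝ))]
    · simp
    · intro s hs
      show |optU T s| = 0
      unfold optU
      rw [if_neg]
      · simp
      · rintro ⟨hlt, -⟩
        have := hs.2
        simp only [ha] at this
        linarith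
  have h2 : ∫ s in a..T, |optU T s| = Real.log 2 / 2 := by
    rw [intervalIntegral.integral_of_le haT,
      setIntegral_congr_fun measurableSet_Ioc (g := fun _ => (1:ℝ)/2)]
    · rw [setIntegral_const]
      rw [measureReal_def, Real.volume_Ioc]
      rw [ENNReal.toReal_ofReal (by linarith : (0:ℝ) ≤ T - a)]
      simp only [ha, smul_eq_mul]
      ring
    · intro s hs
      show |optU T s| = 1/2
      unfold optU
      rw [if_pos]
      · norm_num
      · exact ⟨by simp only [ha] at hs; exact hs.1, hs.2⟩
  rw [← hsplit, h1, h2]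
  ring

lemma J_opt {T : ℝ}
    (hXe : ∀ t : ℝ, X (optU T) b t = b + ∫ s in (0:ℝ)..t, (2 * optU T s - X (optU T) b s))
    (hT : 1 < T) :
    Jc X (optU T) b T = b * Real.exp (-T) - 1/2 - b + Real.log 2 / 2 := by
  have hT0 : (0:ℝ) ≤ T := by linarith
  have hu := optU_mem T
  rw [J_formula hXe hu hT0]
  have hII : IntervalIntegrable (fun s => 2 * Real.exp (s - T) * optU T s) volume 0 T := by
    apply optU_II hT0 (φ := fun s => 2 * Real.exp (s - T)) (by continuity) (C := 2)
    intro s hs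
    have h3 : Real.exp (s - T) ≤ 1 := Real.exp_le_one_iff.2 (by linarith [hs.2])
    rw [abs_mul, abs_two, abs_of_pos (Real.exp_pos _)]
    linarith
  have habs := uc_abs_II hu 0 T
  rw [intervalIntegral.integral_add hII habs, ← exp_pull (u := optU T) T,
    optU_int1 hT, optU_int2 hT]
  have hinv : Real.exp (-T) * Real.exp T = 1 := by rw [← Real.exp_add]; simp
  have h8 : Real.exp (-T) * (-(Real.exp T) / 2) = -(1/2) := by
    have : Real.exp (-T) * (-(Real.exp T) / 2) = -(Real.exp (-T) * Real.exp T) / 2 := by ring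
    rw [this, hinv]
    norm_num
  rw [h8]
  ring

lemma VT_value
    (hX : ∀ u ∈ Uc, ∀ b t : ℝ, X u b t = b + ∫ s in (0:ℝ)..t, (2 * u s - X u b s))
    {T : ℝ} (hT : 1 < T) (b : ℝ) :
    sInf {r : ℝ | ∃ u ∈ Uc, r = Jc X u b T}
      = b * Real.exp (-T) - 1/2 - b + Real.log 2 / 2 := by
  have hT0 : (0:ℝ) ≤ T := by linarith
  have hTl2 : Real.log 2 ≤ T := by linarith [log2_lt_one]
  set v := b * Real.exp (-T) - 1/2 - b + Real.log 2 / 2 with hv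
  have hmem : v ∈ {r : ℝ | ∃ u ∈ Uc, r = Jc X u b T} :=
    ⟨optU T, optU_mem T, (J_opt (fun t => hX _ (optU_mem T) b t) hT).symm⟩
  have hlb : ∀ r ∈ {r : ℝ | ∃ u ∈ Uc, r = Jc X u b T}, v ≤ r := by
    rintro r ⟨u, hu, rfl⟩
    have := J_lower (fun t => hX u hu b t) hu hT0 hTl2
    simp only [hv]
    linarith
  exact le_antisymm (csInf_le ⟨v, hlb⟩ hmem) (le_csInf ⟨v, hmem⟩ hlb)

lemma VT_tendsto
    (hX : ∀ u ∈ Uc, ∀ b t : ℝ, X u b t = b + ∫ s in (0:ℝ)..t, (2 * u s - X u b s))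
    (b : ℝ) :
    Tendsto (fun T : ℝ => sInf {r : ℝ | ∃ u ∈ Uc, r = Jc X u b T}) atTop
      (𝓝 (-b + (Real.log 2 - 1) / 2)) := by
  have he : (fun T : ℝ => b * Real.exp (-T) - 1/2 - b + Real.log 2 / 2)
      =ᶠ[atTop] (fun T : ℝ => sInf {r : ℝ | ∃ u ∈ Uc, r = Jc X u b T}) := by
    filter_upwards [eventually_gt_atTop 1] with T hT
    exact (VT_value hX hT b).symm
  apply Tendsto.congr' he
  have h0 : Tendsto (fun T : ℝ => Real.exp (-T)) atTop (𝓝 0) :=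
    Real.tendsto_exp_neg_atTop_nhds_zero
  have h1 := (((h0.const_mul b).sub_const (1/2)).sub_const b).add_const (Real.log 2 / 2)
  convert h1 using 2
  ring

lemma zero_mem_Uc : (fun _ : ℝ => (0:ℝ)) ∈ Uc :=
  ⟨measurable_const, fun _ => by constructor <;> norm_num⟩

lemma J_zero
    (hXe : ∀ t : ℝ, X (fun _ => 0) b t
      = b + ∫ s in (0:ℝ)..t, (2 * (fun _ : ℝ => (0:ℝ)) s - X (fun _ => 0) b s))
    {T : ℝ} (hT : 0 ≤ T) :
    Jc X (fun _ => 0) b T = b * Real.exp (-T) - b := by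
  rw [J_formula hXe zero_mem_Uc hT]
  simp

lemma ereal_liminf_ge {J LB : ℝ → ℝ} {l : ℝ} (h1 : Tendsto LB atTop (𝓝 l))
    (h2 : ∀ᶠ T in atTop, LB T ≤ J T) :
    (l : EReal) ≤ Filter.liminf (fun T : ℝ => ((J T : ℝ) : EReal)) Filter.atTop := by
  rw [← (EReal.tendsto_coe.2 h1).liminf_eq]
  exact liminf_le_liminf (h2.mono fun T h => EReal.coe_le_coe_iff.2 h)

lemma J_lower3a (hXe : ∀ t : ℝ, X u b t = b + ∫ s in (0:ℝ)..t, (2 * u s - X u b s))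
    (hu : u ∈ Uc) {T : ℝ} (hT0 : 0 ≤ T) :
    b * Real.exp (-T) - b - 2 * (∫ s in (0:ℝ)..T, Real.exp (s - T) * |u s|)
      ≤ Jc X u b T := by
  rw [J_formula hXe hu hT0]
  have hIId : IntervalIntegrable (fun s => Real.exp (s - T) * |u s|) volume 0 T := by
    apply II_bdd_on hT0 (C := 1)
    · exact ((Real.continuous_exp.comp (continuous_id.sub continuous_const)).measurable.mul
        hu.1.abs).aestronglyMeasurable
    · intro s hs
      have h3 : Real.exp (s - T) ≤ 1 := Real.exp_le_one_iff.2 (by linarith [hs.2])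
      have h2 := uc_bdd hu s
      rw [abs_mul, abs_of_pos (Real.exp_pos _), abs_abs]
      nlinarith [(Real.exp_pos (s - T)).le, abs_nonneg (u s)]
  have hII : IntervalIntegrable (fun s => 2 * Real.exp (s - T) * u s + |u s|) volume 0 T := by
    apply II_bdd_on hT0 (C := 2)
    · exact ((((continuous_const.mul (Real.continuous_exp.comp
        (continuous_id.sub continuous_const))).measurable.mul hu.1)).add
          hu.1.abs).aestronglyMeasurable
    · intro s hs
      have h2 := uc_bdd hu s
      have h3 : Real.exp (s - T) ≤ 1 := Real.exp_le_one_iff.2 (by linarith [hs.2])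
      have h4 := (Real.exp_pos (s - T)).le
      have habs2 : |2 * Real.exp (s - T) * u s| ≤ 1 := by
        rw [abs_mul, abs_mul, abs_two, abs_of_nonneg h4]
        nlinarith [abs_nonneg (u s)]
      have h7 := abs_add_le (2 * Real.exp (s - T) * u s) |u s|
      rw [abs_abs] at h7
      linarith
  have hmono : ∫ s in (0:ℝ)..T, (-2) * (Real.exp (s - T) * |u s|)
      ≤ ∫ s in (0:ℝ)..T, (2 * Real.exp (s - T) * u s + |u s|) := by
    apply intervalIntegral.integral_mono_on hT0 (hIId.const_mul (-2)) hII
    intro s _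
    have h4 := Real.exp_pos (s - T)
    have h5 := neg_abs_le (u s)
    have h6 := abs_nonneg (u s)
    nlinarith
  rw [intervalIntegral.integral_const_mul] at hmono
  linarith

lemma J_lower3b (hXe : ∀ t : ℝ, X u b t = b + ∫ s in (0:ℝ)..t, (2 * u s - X u b s))
    (hu : u ∈ Uc) {T : ℝ} (hT0 : 0 ≤ T) :
    b * Real.exp (-T) - b + (∫ s in (0:ℝ)..T, |u s|) - 1 ≤ Jc X u b T := by
  rw [J_formula hXe hu hT0]
  have habs := uc_abs_II hu 0 T
  have hexpII : IntervalIntegrable (fun s => Real.exp (s - T)) volume 0 T := by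
    apply Continuous.intervalIntegrable
    continuity
  have hII : IntervalIntegrable (fun s => 2 * Real.exp (s - T) * u s + |u s|) volume 0 T := by
    apply II_bdd_on hT0 (C := 2)
    · exact ((((continuous_const.mul (Real.continuous_exp.comp
        (continuous_id.sub continuous_const))).measurable.mul hu.1)).add
          hu.1.abs).aestronglyMeasurable
    · intro s hs
      have h2 := uc_bdd hu s
      have h3 : Real.exp (s - T) ≤ 1 := Real.exp_le_one_iff.2 (by linarith [hs.2])
      have h4 := (Real.exp_pos (s - T)).le
      have habs2 : |2 * Real.exp (s - T) * u s| ≤ 1 := by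
        rw [abs_mul, abs_mul, abs_two, abs_of_nonneg h4]
        nlinarith [abs_nonneg (u s)]
      have h7 := abs_add_le (2 * Real.exp (s - T) * u s) |u s|
      rw [abs_abs] at h7
      linarith
  have hmono : ∫ s in (0:ℝ)..T, (|u s| - Real.exp (s - T))
      ≤ ∫ s in (0:ℝ)..T, (2 * Real.exp (s - T) * u s + |u s|) := by
    apply intervalIntegral.integral_mono_on hT0 (habs.sub hexpII) hII
    intro s _
    have h2 := uc_bdd hu s
    have h4 := Real.exp_pos (s - T)
    have h5 := neg_abs_le (u s)
    have h6 := abs_nonneg (u s)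
    nlinarith
  rw [intervalIntegral.integral_sub habs hexpII] at hmono
  have hexpval : ∫ s in (0:ℝ)..T, Real.exp (s - T) = 1 - Real.exp (-T) := by
    rw [intervalIntegral.integral_comp_sub_right _ T, integral_exp]
    simp
  rw [hexpval] at hmono
  have := (Real.exp_pos (-T)).le
  linarith

lemma delta_tendsto {u : ℝ → ℝ} (hu : u ∈ Uc)
    (hint : IntegrableOn (fun s => |u s|) (Ioi 0) volume) :
    Tendsto (fun T : ℝ => ∫ s in (0:ℝ)..T, Real.exp (s - T) * |u s|) atTop (𝓝 0) := by
  set F : ℝ → ℝ → ℝ :=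
    fun T => (Ioc (0:ℝ) T).indicator (fun s => Real.exp (s - T) * |u s|) with hFdef
  have hmeas : ∀ T : ℝ, Measurable (F T) := by
    intro T
    exact ((Real.continuous_exp.comp (continuous_id.sub continuous_const)).measurable.mul
      hu.1.abs).indicator measurableSet_Ioc
  have key : Tendsto (fun T : ℝ => ∫ s in Ioi (0:ℝ), F T s) atTop
      (𝓝 (∫ s in Ioi (0:ℝ), (0:ℝ))) := by
    apply tendsto_integral_filter_of_dominated_convergence (fun s => |u s|)
    · exact Filter.Eventually.of_forall fun T => (hmeas T).aestronglyMeasurable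
    · refine Filter.Eventually.of_forall fun T => (Filter.Eventually.of_forall fun s => ?_)
      simp only [Real.norm_eq_abs, hFdef]
      by_cases hs : s ∈ Ioc (0:ℝ) T
      · rw [Set.indicator_of_mem hs]
        have h3 : Real.exp (s - T) ≤ 1 := Real.exp_le_one_iff.2 (by linarith [hs.2])
        rw [abs_mul, abs_of_pos (Real.exp_pos _), abs_abs]
        nlinarith [abs_nonneg (u s), (Real.exp_pos (s - T)).le]
      · rw [Set.indicator_of_notMem hs]
        simp [abs_nonneg]
    · exact hint
    · refine (ae_restrict_mem measurableSet_Ioi).mono fun s hs => ?_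
      have hlim : Tendsto (fun T : ℝ => (Real.exp s * |u s|) * Real.exp (-T)) atTop (𝓝 0) := by
        have := Real.tendsto_exp_neg_atTop_nhds_zero.const_mul (Real.exp s * |u s|)
        simpa using this
      apply hlim.congr'
      filter_upwards [eventually_ge_atTop s] with T hT
      simp only [hFdef]
      have hind : (Ioc (0:ℝ) T).indicator (fun r => Real.exp (r - T) * |u r|) s
          = Real.exp (s - T) * |u s| :=
        Set.indicator_of_mem (show s ∈ Ioc (0:ℝ) T from ⟨hs, hT⟩) _
      rw [hind, show s - T = s + -T by ring, Real.exp_add]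
      ring
  have heq : ∀ᶠ T : ℝ in atTop,
      (∫ s in Ioi (0:ℝ), F T s) = ∫ s in (0:ℝ)..T, Real.exp (s - T) * |u s| := by
    filter_upwards [eventually_ge_atTop (0:ℝ)] with T hT
    rw [intervalIntegral.integral_of_le hT, hFdef, setIntegral_indicator measurableSet_Ioc]
    congr 1
    rw [Set.inter_eq_right.2 (fun s hs => hs.1)]
  have : (∫ s in Ioi (0:ℝ), (0:ℝ)) = 0 := by simp
  rw [this] at key
  exact key.congr' heq

lemma IT_unbounded {u : ℝ → ℝ} (hu : u ∈ Uc)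
    (hni : ¬ IntegrableOn (fun s => |u s|) (Ioi 0) volume) :
    ∀ M : ℝ, ∀ᶠ T : ℝ in atTop, M ≤ ∫ s in (0:ℝ)..T, |u s| := by
  have hmono : ∀ T₁ T₂ : ℝ, 0 ≤ T₁ → T₁ ≤ T₂ →
      (∫ s in (0:ℝ)..T₁, |u s|) ≤ ∫ s in (0:ℝ)..T₂, |u s| := by
    intro T₁ T₂ h1 h2
    rw [intervalIntegral.integral_of_le h1, intervalIntegral.integral_of_le (h1.trans h2)]
    apply setIntegral_mono_set
    · exact (intervalIntegrable_iff_integrableOn_Ioc_of_le (h1.trans h2)).1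
        (uc_abs_II hu 0 T₂)
    · exact (ae_restrict_iff' measurableSet_Ioc).2
        (Filter.Eventually.of_forall fun s _ => abs_nonneg _)
    · exact HasSubset.Subset.eventuallyLE (Ioc_subset_Ioc le_rfl h2)
  intro M
  have hex : ∃ n : ℕ, M < ∫ s in (0:ℝ)..(n:ℝ), |u s| := by
    by_contra hcon
    push_neg at hcon
    apply hni
    apply integrableOn_Ioi_of_intervalIntegral_norm_bounded M 0
      (fun n : ℕ => (intervalIntegrable_iff_integrableOn_Ioc_of_le (by positivity)).1
        (uc_abs_II hu 0 (n:ℝ)))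
      tendsto_natCast_atTop_atTop
    refine Filter.Eventually.of_forall fun n => ?_
    calc (∫ s in (0:ℝ)..(n:ℝ), ‖|u s|‖) = ∫ s in (0:ℝ)..(n:ℝ), |u s| := by
          apply intervalIntegral.integral_congr
          intro s _
          simp [Real.norm_eq_abs, abs_abs]
      _ ≤ M := hcon n
  obtain ⟨n, hn⟩ := hex
  filter_upwards [eventually_ge_atTop (n:ℝ)] with T hT
  exact hn.le.trans (hmono _ _ (by positivity) hT)

lemma liminf_ge_negb
    (hX : ∀ u ∈ Uc, ∀ b t : ℝ, X u b t = b + ∫ s in (0:ℝ)..t, (2 * u s - X u b s))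
    (b : ℝ) {u : ℝ → ℝ} (hu : u ∈ Uc) :
    ((-b : ℝ) : EReal)
      ≤ Filter.liminf (fun T : ℝ => ((Jc X u b T : ℝ) : EReal)) Filter.atTop := by
  have hXe : ∀ t : ℝ, X u b t = b + ∫ s in (0:ℝ)..t, (2 * u s - X u b s) := hX u hu b
  by_cases hint : IntegrableOn (fun s => |u s|) (Ioi 0) volume
  · -- LB = b e^{-T} - b - 2 δ T
    apply ereal_liminf_ge
      (LB := fun T => b * Real.exp (-T) - b - 2 * ∫ s in (0:ℝ)..T, Real.exp (s - T) * |u s|)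
    · have h1 := (Real.tendsto_exp_neg_atTop_nhds_zero.const_mul b)
      have h2 := (delta_tendsto hu hint).const_mul 2
      have := (h1.sub_const b).sub h2
      simpa using this
    · filter_upwards [eventually_ge_atTop (0:ℝ)] with T hT
      exact J_lower3a hXe hu hT
  · apply ereal_liminf_ge (LB := fun _ : ℝ => -b) tendsto_const_nhds
    filter_upwards [IT_unbounded hu hint (|b| + 1), eventually_ge_atTop (0:ℝ)] with T h1 h2
    have h3 := J_lower3b hXe hu h2
    have h4 : Real.exp (-T) ≤ 1 := Real.exp_le_one_iff.2 (by linarith)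
    have h5 := (Real.exp_pos (-T)).le
    have h6 := neg_abs_le b
    have h7 := le_abs_self b
    nlinarith

lemma Vinf_value
    (hX : ∀ u ∈ Uc, ∀ b t : ℝ, X u b t = b + ∫ s in (0:ℝ)..t, (2 * u s - X u b s))
    (b : ℝ) :
    sInf {e : EReal | ∃ u ∈ Uc,
        e = Filter.liminf (fun T : ℝ => ((Jc X u b T : ℝ) : EReal)) Filter.atTop}
      = ((-b : ℝ) : EReal) := by
  apply le_antisymm
  · apply sInf_le
    refine ⟨fun _ => 0, zero_mem_Uc, ?_⟩
    have hXe := hX _ zero_mem_Uc b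
    have hJ : ∀ᶠ T : ℝ in atTop, b * Real.exp (-T) - b = Jc X (fun _ => 0) b T := by
      filter_upwards [eventually_ge_atTop (0:ℝ)] with T hT
      exact (J_zero hXe hT).symm
    have htend : Tendsto (fun T : ℝ => b * Real.exp (-T) - b) atTop (𝓝 (-b)) := by
      have := (Real.tendsto_exp_neg_atTop_nhds_zero.const_mul b).sub_const b
      simpa using this
    have : Tendsto (fun T : ℝ => Jc X (fun _ => 0) b T) atTop (𝓝 (-b)) :=
      htend.congr' hJ
    exact ((EReal.tendsto_coe.2 this).liminf_eq).symm
  · apply le_sInf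
    rintro e ⟨u, hu, rfl⟩
    exact liminf_ge_negb hX b hu

end AuxScalarExample

theorem example_Vall_lt_Vinf (X : (ℝ → ℝ) → ℝ → ℝ → ℝ)
    (hX : ∀ u ∈ Uc, ∀ b t : ℝ, X u b t = b + ∫ s in (0:ℝ)..t, (2 * u s - X u b s)) :
    (∀ T : ℝ, 1 < T → ∀ b : ℝ,
      sInf {r : ℝ | ∃ u ∈ Uc, r = Jc X u b T}
        = b * Real.exp (-T) - 1/2 - b + Real.log 2 / 2) ∧
    (∀ b : ℝ,
      Tendsto (fun T : ℝ => sInf {r : ℝ | ∃ u ∈ Uc, r = Jc X u b T}) atTop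
        (𝓝 (-b + (Real.log 2 - 1) / 2))) ∧
    ∀ b : ℝ,
      sInf {e : EReal | ∃ u ∈ Uc,
          e = Filter.liminf (fun T : ℝ => ((Jc X u b T : ℝ) : EReal)) Filter.atTop}
        = ((-b : ℝ) : EReal) ∧
      -b + (Real.log 2 - 1) / 2 < -b := by
  refine ⟨fun T hT b => VT_value hX hT b, fun b => VT_tendsto hX b,
    fun b => ⟨Vinf_value hX b, ?_⟩⟩
  have := log2_lt_one
  linarith

end
end
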